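/- arXiv:2009.10137 — 5 statements merged into one kernel-verified Lean document; each statement's English description precedes it below -/
import Mathlib

section
/- Let G be a finite abelian group and V a faithful completely reducible G-module (over a finite field or as a finite abelian group with G acting by automorphisms such that V is a direct sum of irreducible G-submodules). Then there exists a vector x in V such that the stabilizer (centralizer) of x in G is trivial. -/
/-- A subgroup of `V` is `G`-invariant if it is closed under the action of `G`. -/
def IsGInvariant (G : Type*) {V : Type*} [Group G] [AddCommGroup V]
    [DistribMulAction G V] (W : AddSubgroup V) : Prop :=
  ∀ g : G, ∀ v ∈ W, g • v ∈ W

/-- A `G`-invariant subgroup is irreducible if it is nontrivial and has no proper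
nontrivial `G`-invariant subgroup. -/
def IsIrreducibleGSub (G : Type*) {V : Type*} [Group G] [AddCommGroup V]
    [DistribMulAction G V] (W : AddSubgroup V) : Prop :=
  W ≠ ⊥ ∧ ∀ U : AddSubgroup V, IsGInvariant G U → U ≤ W → U = ⊥ ∨ U = W

/-- Let `G` be a finite abelian group acting faithfully on a finite
abelian group `V` by automorphisms, such that `V` is a direct sum of irreducible
`G`-submodules.  Then there exists `x ∈ V` whose stabiliser in `G` is trivial. -/
theorem exists_trivial_stabilizer_of_abelian
    (G V : Type*) [CommGroup G] [Finite G] [AddCommGroup V] [Finite V]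
    [DistribMulAction G V] [FaithfulSMul G V]
    (ι : Type*) (W : ι → AddSubgroup V)
    (hinv : ∀ i, IsGInvariant G (W i))
    (hirr : ∀ i, IsIrreducibleGSub G (W i))
    (hindep : iSupIndep W)
    (hsup : (⨆ i, W i) = ⊤) :
    ∃ x : V, ∀ g : G, g • x = x → g = 1 := by
  classical
  -- choose a nonzero element in each W i
  have hx : ∀ i, ∃ v : V, v ∈ W i ∧ v ≠ 0 := by
    intro i
    by_contra h
    push_neg at h
    exact (hirr i).1 (AddSubgroup.eq_bot_iff_forall _ |>.2 fun v hv => by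
      by_contra hne; exact hne (h v hv ▸ rfl) |>.elim)
  choose x hxW hxne using hx
  -- ι is finite
  have hdisj : Pairwise (Function.onFun Disjoint W) := hindep.pairwiseDisjoint
  have hinj : Function.Injective x := by
    intro i j hij
    by_contra hne
    have : x i ∈ W i ⊓ W j := ⟨hxW i, hij ▸ hxW j⟩
    rw [(hdisj hne).eq_bot] at this
    exact hxne i this
  haveI : Finite ι := Finite.of_injective x hinj
  haveI : Fintype ι := Fintype.ofFinite ι
  refine ⟨∑ i, x i, fun g hg => ?_⟩
  -- fixed points of g form a subgroup; since G is abelian it is G-invariant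
  set F : AddSubgroup V :=
    { carrier := {v | g • v = v}
      zero_mem' := smul_zero g
      add_mem' := fun {a b} ha hb => by
        simp only [Set.mem_setOf_eq] at *
        rw [smul_add, ha, hb]
      neg_mem' := fun {a} ha => by
        simp only [Set.mem_setOf_eq] at *
        rw [smul_neg, ha] } with hF
  have hFmem : ∀ v : V, v ∈ F ↔ g • v = v := fun v => Iff.rfl
  have hFinv : IsGInvariant G F := by
    intro h v hv
    rw [hFmem] at hv ⊢
    rw [← mul_smul, mul_comm, mul_smul, hv]
  -- each component is fixed by g
  have hcomp : ∀ i, g • x i = x i := by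
    intro i
    -- the element y : Π₀ i, W i with components g • x i - x i sums to 0
    set y : Π₀ i, (W i : Type _) :=
      DFinsupp.equivFunOnFintype.symm (fun i => ⟨g • x i - x i,
        AddSubgroup.sub_mem _ (hinv i g _ (hxW i)) (hxW i)⟩) with hy
    have hsum : DFinsupp.sumAddHom (fun i => (W i).subtype) y = 0 := by
      rw [DFinsupp.sumAddHom_apply, DFinsupp.sum_eq_sum_fintype]
      · simp only [hy, Equiv.apply_symm_apply, AddSubgroup.coe_subtype]
        rw [Finset.sum_sub_distrib, ← Finset.smul_sum, hg, sub_self]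
      · intro i; rfl
    have h0 : y = 0 := hindep.dfinsuppSumAddHom_injective (by rw [hsum, map_zero])
    have := congrArg (fun z => ((DFinsupp.equivFunOnFintype z : ∀ i, W i) i : V)) h0
    simp only [hy, Equiv.apply_symm_apply] at this
    have h2 : g • x i - x i = 0 := this
    rwa [sub_eq_zero] at h2
  -- g fixes everything, hence g = 1
  have hle : ∀ i, W i ≤ F := by
    intro i
    rcases (hirr i).2 (W i ⊓ F) (fun h v hv => ⟨hinv i h v hv.1, hFinv h v hv.2⟩)
      inf_le_left with h | h
    · exfalso
      have : x i ∈ W i ⊓ F := ⟨hxW i, (hFmem _).2 (hcomp i)⟩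
      rw [h] at this
      exact hxne i this
    · exact inf_eq_left.mp h
  have hFtop : F = ⊤ := top_unique (hsup ▸ iSup_le hle)
  refine eq_of_smul_eq_smul (fun v : V => ?_)
  rw [one_smul]
  exact (hFmem v).mp (hFtop ▸ AddSubgroup.mem_top v)
end

section
/- Let n = ab with a ≥ 4 and b = 2, and let G = Sym(n) act on the set Ω of partitions of {1,...,n} into a blocks of size 2. Then the minimal size of a base for this action is 3; that is, there exist three partitions in Ω whose common stabilizer in G is trivial, but no two partitions in Ω have trivial common stabilizer. -/
/-- A permutation `g` of `Fin n` stabilises a finpartition `P` of `Fin n` if it maps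
every block of `P` to a block of `P`. -/
def StabilizesPartition {n : ℕ} (g : Equiv.Perm (Fin n))
    (P : Finpartition (Finset.univ : Finset (Fin n))) : Prop :=
  ∀ B ∈ P.parts, B.image g ∈ P.parts

/-- A finpartition of `Fin n` into `a` blocks, each of size `b`. -/
def IsBlockPartition {n : ℕ} (a b : ℕ)
    (P : Finpartition (Finset.univ : Finset (Fin n))) : Prop :=
  P.parts.card = a ∧ ∀ B ∈ P.parts, B.card = b

set_option linter.unusedSectionVars false
set_option linter.unusedVariables false
open Finset Equiv Equiv.Perm

namespace BaseAux

variable {n : ℕ}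


variable {n : ℕ}

/-- The partition of `Fin n` into pairs `{x, m x}` for a fixed-point-free involution `m`. -/
def pairPartition (m : Perm (Fin n)) (hfp : ∀ x, m x ≠ x) (hinv : ∀ x, m (m x) = x) :
    Finpartition (Finset.univ : Finset (Fin n)) where
  parts := Finset.univ.image fun x => ({x, m x} : Finset (Fin n))
  supIndep := by
    rw [Finset.supIndep_iff_pairwiseDisjoint]
    rintro B hB C hC hne
    simp only [coe_image, Set.mem_image, mem_coe] at hB hC
    obtain ⟨x, -, rfl⟩ := hB
    obtain ⟨y, -, rfl⟩ := hC
    simp only [Function.onFun, id_eq]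
    rw [Finset.disjoint_left]
    intro z hz hz'
    apply hne
    simp only [mem_insert, mem_singleton] at hz hz'
    rcases hz with h1 | h1 <;> rcases hz' with h2 | h2
    · rw [← h1, ← h2]
    · have hx : x = m y := by rw [← h1, h2]
      rw [hx, hinv y, Finset.pair_comm]
    · have hy : y = m x := by rw [← h2, h1]
      rw [hy, hinv x, Finset.pair_comm]
    · have hm : m x = m y := by rw [← h1, h2]
      have hxy : x = y := by
        have := congrArg m hm
        rwa [hinv, hinv] at this
      rw [hxy]
  sup_parts := by
    apply le_antisymm (le_top)
    intro x _
    rw [Finset.mem_sup]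
    exact ⟨{x, m x}, mem_image_of_mem _ (mem_univ x), by simp⟩
  bot_notMem := by
    simp only [bot_eq_empty, mem_image, mem_univ, true_and]
    rintro ⟨x, hx⟩
    have : x ∈ ({x, m x} : Finset (Fin n)) := by simp
    rw [hx] at this
    exact notMem_empty x this

lemma mem_pairPartition (m : Perm (Fin n)) (hfp : ∀ x, m x ≠ x) (hinv : ∀ x, m (m x) = x)
    (x : Fin n) : ({x, m x} : Finset (Fin n)) ∈ (pairPartition m hfp hinv).parts :=
  mem_image_of_mem _ (mem_univ x)

lemma pairPartition_parts (m : Perm (Fin n)) (hfp : ∀ x, m x ≠ x) (hinv : ∀ x, m (m x) = x)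
    {B : Finset (Fin n)} (hB : B ∈ (pairPartition m hfp hinv).parts) :
    ∃ x, B = {x, m x} := by
  simp only [pairPartition, mem_image, mem_univ, true_and] at hB
  obtain ⟨x, hx⟩ := hB
  exact ⟨x, hx.symm⟩

lemma card_parts_of_two {a : ℕ} (P : Finpartition (Finset.univ : Finset (Fin (a * 2))))
    (h2 : ∀ B ∈ P.parts, B.card = 2) : P.parts.card = a := by
  have h := P.sum_card_parts
  rw [Finset.sum_congr rfl h2, Finset.sum_const, smul_eq_mul, Finset.card_univ,
    Fintype.card_fin] at h
  omega

lemma isBlockPartition_pairPartition {a : ℕ} (m : Perm (Fin (a * 2)))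
    (hfp : ∀ x, m x ≠ x) (hinv : ∀ x, m (m x) = x) :
    IsBlockPartition a 2 (pairPartition m hfp hinv) := by
  have h2 : ∀ B ∈ (pairPartition m hfp hinv).parts, B.card = 2 := by
    intro B hB
    obtain ⟨x, rfl⟩ := pairPartition_parts m hfp hinv hB
    exact Finset.card_pair (Ne.symm (hfp x))
  exact ⟨card_parts_of_two _ h2, h2⟩

lemma image_pair (g : Perm (Fin n)) (x y : Fin n) :
    ({x, y} : Finset (Fin n)).image g = {g x, g y} := by
  simp [Finset.image_insert]

/-- If `g` commutes with `m` then `g` stabilises any partition whose parts are the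
`m`-pairs. -/
lemma stabilizes_of_comm {g m : Perm (Fin n)}
    {P : Finpartition (Finset.univ : Finset (Fin n))}
    (hrep : ∀ B ∈ P.parts, ∃ x, B = {x, m x})
    (hmem : ∀ x, ({x, m x} : Finset (Fin n)) ∈ P.parts)
    (hc : ∀ x, g (m x) = m (g x)) : StabilizesPartition g P := by
  intro B hB
  obtain ⟨x, rfl⟩ := hrep B hB
  rw [image_pair, hc]
  exact hmem (g x)

/-- Conversely, if `g` stabilises a partition whose parts are the `m`-pairs of a
fixed-point-free involution `m`, then `g` commutes with `m`. -/
lemma comm_of_stabilizes {g m : Perm (Fin n)}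
    {P : Finpartition (Finset.univ : Finset (Fin n))}
    (hfp : ∀ x, m x ≠ x)
    (hmem : ∀ x, ({x, m x} : Finset (Fin n)) ∈ P.parts)
    (hs : StabilizesPartition g P) : ∀ x, g (m x) = m (g x) := by
  intro x
  have h1 : ({x, m x} : Finset (Fin n)).image g ∈ P.parts := hs _ (hmem x)
  rw [image_pair] at h1
  have h2 := hmem (g x)
  have heq : ({g x, g (m x)} : Finset (Fin n)) = {g x, m (g x)} :=
    P.eq_of_mem_parts h1 h2 (Finset.mem_insert_self (g x) _) (Finset.mem_insert_self (g x) _)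
  have : g (m x) ∈ ({g x, m (g x)} : Finset (Fin n)) := by
    rw [← heq]; simp
  simp only [mem_insert, mem_singleton] at this
  rcases this with h | h
  · exact absurd (g.injective h) (hfp x)
  · exact h



section InvolOf

variable (P : Finpartition (Finset.univ : Finset (Fin n)))
  (h2 : ∀ B ∈ P.parts, B.card = 2)

/-- The "other element" map of a partition into pairs. -/
noncomputable def otherFun (x : Fin n) : Fin n :=
  ((P.part x).erase x).min' (by
    rw [← Finset.card_pos, Finset.card_erase_of_mem (P.mem_part (mem_univ x)),
      h2 _ (P.part_mem.2 (mem_univ x))]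
    norm_num)

lemma otherFun_mem (x : Fin n) : otherFun P h2 x ∈ (P.part x).erase x :=
  Finset.min'_mem _ _

lemma otherFun_ne (x : Fin n) : otherFun P h2 x ≠ x :=
  (Finset.mem_erase.1 (otherFun_mem P h2 x)).1

lemma otherFun_mem_part (x : Fin n) : otherFun P h2 x ∈ P.part x :=
  (Finset.mem_erase.1 (otherFun_mem P h2 x)).2

lemma part_eq_pair (x : Fin n) : P.part x = {x, otherFun P h2 x} := by
  refine (Finset.eq_of_subset_of_card_le ?_ ?_).symm
  · intro z hz
    simp only [mem_insert, mem_singleton] at hz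
    rcases hz with h | h
    · rw [h]; exact P.mem_part (mem_univ x)
    · rw [h]; exact otherFun_mem_part P h2 x
  · rw [h2 _ (P.part_mem.2 (mem_univ x)), Finset.card_pair (Ne.symm (otherFun_ne P h2 x))]

lemma otherFun_involutive : Function.Involutive (otherFun P h2) := by
  intro x
  have hpart : P.part (otherFun P h2 x) = P.part x :=
    P.part_eq_of_mem (P.part_mem.2 (mem_univ x)) (otherFun_mem_part P h2 x)
  have h1 : otherFun P h2 (otherFun P h2 x) ∈ P.part x := by
    rw [← hpart]; exact otherFun_mem_part P h2 _
  rw [part_eq_pair P h2 x] at h1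
  simp only [mem_insert, mem_singleton] at h1
  rcases h1 with h | h
  · exact h
  · exact absurd h (otherFun_ne P h2 _)

/-- The fixed-point-free involution of a partition into pairs. -/
noncomputable def involOf : Perm (Fin n) :=
  (otherFun_involutive P h2).toPerm

lemma involOf_apply (x : Fin n) : involOf P h2 x = otherFun P h2 x := rfl

lemma involOf_fpf (x : Fin n) : involOf P h2 x ≠ x := otherFun_ne P h2 x

lemma involOf_invol (x : Fin n) : involOf P h2 (involOf P h2 x) = x :=
  otherFun_involutive P h2 x

lemma pair_mem_parts (x : Fin n) :
    ({x, involOf P h2 x} : Finset (Fin n)) ∈ P.parts := by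
  rw [involOf_apply, ← part_eq_pair P h2 x]
  exact P.part_mem.2 (mem_univ x)

lemma parts_eq_pairs {B : Finset (Fin n)} (hB : B ∈ P.parts) :
    ∃ x, B = {x, involOf P h2 x} := by
  have hne : B.Nonempty := Finset.card_pos.1 (by rw [h2 _ hB]; norm_num)
  obtain ⟨x, hx⟩ := hne
  refine ⟨x, ?_⟩
  rw [involOf_apply, ← part_eq_pair P h2 x, P.part_eq_of_mem hB hx]

end InvolOf
/-- A swap of a block commutes with the pairing involution. -/
lemma swap_comm_invol {m : Perm (Fin n)} (hinv : ∀ x, m (m x) = x) (p : Fin n) :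
    ∀ x, Equiv.swap p (m p) (m x) = m (Equiv.swap p (m p) x) := by
  intro x
  by_cases h1 : x = p
  · rw [h1, Equiv.swap_apply_right, Equiv.swap_apply_left, hinv]
  · by_cases h2 : x = m p
    · rw [h2, hinv, Equiv.swap_apply_left, Equiv.swap_apply_right]
    · have hmx1 : m x ≠ p := fun h => h2 (by rw [← hinv x, h])
      have hmx2 : m x ≠ m p := fun h => h1 (by rw [← hinv x, h, hinv])
      rw [Equiv.swap_apply_of_ne_of_ne hmx1 hmx2, Equiv.swap_apply_of_ne_of_ne h1 h2]

section Rotation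

variable {m₁ m₂ : Perm (Fin n)} (hm1 : m₁ * m₁ = 1) (hm2 : m₂ * m₂ = 1)

include hm1 hm2 in
lemma comm_zpow_aux (k : ℤ) : m₁ * (m₂ * m₁) ^ k = (m₂ * m₁) ^ (-k) * m₁ := by
  have hm1inv : m₁⁻¹ = m₁ := inv_eq_of_mul_eq_one_right hm1
  have hm2inv : m₂⁻¹ = m₂ := inv_eq_of_mul_eq_one_right hm2
  have h1 : m₁ * (m₂ * m₁) * m₁⁻¹ = (m₂ * m₁)⁻¹ := by
    rw [hm1inv, mul_inv_rev, hm1inv, hm2inv, ← mul_assoc m₁ m₂ m₁,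
      mul_assoc (m₁ * m₂) m₁ m₁, hm1, mul_one]
  have key : m₁ * (m₂ * m₁) ^ k * m₁⁻¹ = (m₂ * m₁) ^ (-k) := by
    rw [← conj_zpow (i := k) (a := m₁) (b := m₂ * m₁), h1, inv_zpow, zpow_neg]
  calc m₁ * (m₂ * m₁) ^ k = m₁ * (m₂ * m₁) ^ k * m₁⁻¹ * m₁ := by
        rw [mul_assoc, hm1inv, hm1, mul_one]
      _ = (m₂ * m₁) ^ (-k) * m₁ := by rw [key]

include hm1 hm2 in
lemma comm_zpow_aux' (k : ℤ) (x : Fin n) :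
    m₁ (((m₂ * m₁) ^ k) x) = ((m₂ * m₁) ^ (-k)) (m₁ x) := by
  have := congrArg (fun p : Perm (Fin n) => p x) (comm_zpow_aux hm1 hm2 k)
  simpa [Equiv.Perm.mul_apply] using this

include hm1 hm2 in
lemma comm_zpow_aux₂ (k : ℤ) (x : Fin n) :
    m₂ (((m₂ * m₁) ^ k) x) = ((m₂ * m₁) ^ (-k)) (m₂ x) := by
  have h := comm_zpow_aux (m₁ := m₂) (m₂ := m₁) hm2 hm1 (-k)
  have hm1inv : m₁⁻¹ = m₁ := inv_eq_of_mul_eq_one_right hm1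
  have hm2inv : m₂⁻¹ = m₂ := inv_eq_of_mul_eq_one_right hm2
  have hswap : (m₁ * m₂ : Perm (Fin n)) = (m₂ * m₁)⁻¹ := by
    rw [mul_inv_rev, hm1inv, hm2inv]
  rw [hswap, inv_zpow, inv_zpow, ← zpow_neg, ← zpow_neg, neg_neg] at h
  have := congrArg (fun p : Perm (Fin n) => p x) h
  simpa [Equiv.Perm.mul_apply] using this

include hm1 hm2 in
lemma not_sameCycle_base (hfp1 : ∀ x, m₁ x ≠ x) (hfp2 : ∀ x, m₂ x ≠ x) (p : Fin n) :
    ¬ (m₂ * m₁).SameCycle p (m₁ p) := by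
  rintro ⟨k, hk⟩
  set c : Perm (Fin n) := m₂ * m₁ with hc
  rcases Int.even_or_odd k with ⟨j, hj⟩ | ⟨j, hj⟩
  · apply hfp1 ((c ^ j) p)
    have h := comm_zpow_aux' hm1 hm2 j p
    rw [h, ← hk, ← Equiv.Perm.mul_apply, ← zpow_add]
    have he : -j + k = j := by omega
    rw [he]
  · apply hfp2 ((c ^ (j + 1)) p)
    have hm2c : ∀ z, m₂ z = c (m₁ z) := by
      intro z
      have hcm : (c * m₁ : Perm (Fin n)) = m₂ := by rw [hc, mul_assoc, hm1, mul_one]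
      rw [← hcm, Equiv.Perm.mul_apply]
    calc m₂ ((c ^ (j + 1)) p)
        = c (m₁ ((c ^ (j + 1)) p)) := hm2c _
      _ = c ((c ^ (-(j + 1))) (m₁ p)) := by rw [comm_zpow_aux' hm1 hm2]
      _ = c ((c ^ (-(j + 1))) ((c ^ k) p)) := by rw [hk]
      _ = ((c ^ (1 : ℤ)) * (c ^ (-(j + 1)) * c ^ k)) p := by rw [zpow_one]; rfl
      _ = (c ^ (1 + (-(j + 1) + k))) p := by rw [zpow_add, zpow_add]
      _ = (c ^ (j + 1)) p := by
          have he : 1 + (-(j + 1) + k) = j + 1 := by omega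
          rw [he]

variable (hfp1 : ∀ x, m₁ x ≠ x) (hfp2 : ∀ x, m₂ x ≠ x) (p : Fin n)

/-- The rotation-by-2 on the alternating cycle through `p`, identity elsewhere. -/
def rot : Perm (Fin n) where
  toFun x := if (m₂ * m₁).SameCycle p x then (m₂ * m₁) x
    else if (m₂ * m₁).SameCycle (m₁ p) x then (m₂ * m₁)⁻¹ x else x
  invFun x := if (m₂ * m₁).SameCycle p x then (m₂ * m₁)⁻¹ x
    else if (m₂ * m₁).SameCycle (m₁ p) x then (m₂ * m₁) x else x
  left_inv := by
    intro x
    set c : Perm (Fin n) := m₂ * m₁ with hc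
    by_cases h : c.SameCycle p x
    · simp only [if_pos h, if_pos ((sameCycle_apply_right).2 h), Equiv.Perm.coe_inv, Equiv.symm_apply_apply]
    · by_cases h2 : c.SameCycle (m₁ p) x
      · have hn : ¬ c.SameCycle p (c⁻¹ x) := fun hh =>
          h (by rwa [Equiv.Perm.coe_inv, sameCycle_symm_apply_right] at hh)
        simp only [if_neg h, if_pos h2, if_neg (show ¬ c.SameCycle p (c.symm x) from hn),
          if_pos (show c.SameCycle (m₁ p) (c.symm x) from (sameCycle_symm_apply_right).2 h2), Equiv.Perm.coe_inv, Equiv.apply_symm_apply]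
      · simp only [if_neg h, if_neg h2]
  right_inv := by
    intro x
    set c : Perm (Fin n) := m₂ * m₁ with hc
    by_cases h : c.SameCycle p x
    · simp only [if_pos h, if_pos (show c.SameCycle p (c.symm x) from (sameCycle_symm_apply_right).2 h),
        Equiv.Perm.coe_inv, Equiv.apply_symm_apply]
    · by_cases h2 : c.SameCycle (m₁ p) x
      · have hn : ¬ c.SameCycle p (c x) := fun hh =>
          h (by rwa [sameCycle_apply_right] at hh)
        simp only [if_neg h, if_pos h2, if_neg hn,
          if_pos ((sameCycle_apply_right).2 h2), Equiv.Perm.coe_inv, Equiv.symm_apply_apply]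
      · simp only [if_neg h, if_neg h2]

lemma rot_apply (x : Fin n) : rot (m₁ := m₁) (m₂ := m₂) p x =
    if (m₂ * m₁).SameCycle p x then (m₂ * m₁) x
    else if (m₂ * m₁).SameCycle (m₁ p) x then (m₂ * m₁)⁻¹ x else x := rfl


variable (hi1 : ∀ x, m₁ (m₁ x) = x) (hi2 : ∀ x, m₂ (m₂ x) = x)

include hm1 hm2 in
lemma sc_A {p x : Fin n} (h : (m₂ * m₁).SameCycle p x) :
    (m₂ * m₁).SameCycle (m₁ p) (m₁ x) := by
  obtain ⟨i, hi⟩ := h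
  exact ⟨-i, by rw [← comm_zpow_aux' hm1 hm2, hi]⟩

include hm1 hm2 hi1 in
lemma sc_B {p x : Fin n} (h : (m₂ * m₁).SameCycle (m₁ p) x) :
    (m₂ * m₁).SameCycle p (m₁ x) := by
  obtain ⟨i, hi⟩ := h
  exact ⟨-i, by rw [← hi, comm_zpow_aux' hm1 hm2, hi1]⟩

include hm1 hm2 hi1 in
lemma sc_A2 {p x : Fin n} (h : (m₂ * m₁).SameCycle p x) :
    (m₂ * m₁).SameCycle (m₁ p) (m₂ x) := by
  obtain ⟨i, hi⟩ := h
  refine ⟨-i + 1, ?_⟩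
  rw [zpow_add, Equiv.Perm.mul_apply, zpow_one]
  have h1 : (m₂ * m₁ : Perm (Fin n)) (m₁ p) = m₂ p := by
    rw [Equiv.Perm.mul_apply, hi1]
  rw [h1, ← comm_zpow_aux₂ hm1 hm2, hi]

include hm1 hm2 in
lemma sc_B2 {p x : Fin n} (h : (m₂ * m₁).SameCycle (m₁ p) x) :
    (m₂ * m₁).SameCycle p (m₂ x) := by
  obtain ⟨i, hi⟩ := h
  refine ⟨-i + 1, ?_⟩
  rw [zpow_add, Equiv.Perm.mul_apply, zpow_one]
  have h1 : (m₂ * m₁ : Perm (Fin n)) p = m₂ (m₁ p) := Equiv.Perm.mul_apply _ _ _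
  rw [h1, ← comm_zpow_aux₂ hm1 hm2, hi]

include hm1 hm2 hi1 hi2 in
lemma rot_comm₁ {p : Fin n} (hd : ¬ (m₂ * m₁).SameCycle p (m₁ p)) :
    ∀ x, rot (m₁ := m₁) (m₂ := m₂) p (m₁ x) = m₁ (rot (m₁ := m₁) (m₂ := m₂) p x) := by
  have hm1inv : m₁⁻¹ = m₁ := inv_eq_of_mul_eq_one_right hm1
  have hm2inv : m₂⁻¹ = m₂ := inv_eq_of_mul_eq_one_right hm2
  have hcz : ∀ z, (m₂ * m₁ : Perm (Fin n)) z = m₂ (m₁ z) := fun z =>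
    Equiv.Perm.mul_apply _ _ _
  have hcinv : ∀ z, (m₂ * m₁ : Perm (Fin n))⁻¹ z = m₁ (m₂ z) := by
    intro z
    rw [mul_inv_rev, hm1inv, hm2inv, Equiv.Perm.mul_apply]
  intro x
  rw [rot_apply, rot_apply]
  by_cases h : (m₂ * m₁).SameCycle p x
  · have t1 : (m₂ * m₁).SameCycle (m₁ p) (m₁ x) := sc_A hm1 hm2 h
    have t2 : ¬ (m₂ * m₁).SameCycle p (m₁ x) := fun h' => hd (h'.trans t1.symm)
    rw [if_pos h, if_neg t2, if_pos t1, hcinv, hcz]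
  · by_cases h2 : (m₂ * m₁).SameCycle (m₁ p) x
    · have t1 : (m₂ * m₁).SameCycle p (m₁ x) := sc_B hm1 hm2 hi1 h2
      rw [if_neg h, if_pos h2, if_pos t1, hcz, hcinv, hi1, hi1]
    · have t1 : ¬ (m₂ * m₁).SameCycle p (m₁ x) := fun h' => by
        have := sc_A hm1 hm2 h'
        rw [hi1] at this
        exact h2 this
      have t2 : ¬ (m₂ * m₁).SameCycle (m₁ p) (m₁ x) := fun h' => by
        have := sc_B hm1 hm2 hi1 h'
        rw [hi1] at this
        exact h this
      rw [if_neg h, if_neg h2, if_neg t1, if_neg t2]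

include hm1 hm2 hi1 hi2 in
lemma rot_comm₂ {p : Fin n} (hd : ¬ (m₂ * m₁).SameCycle p (m₁ p)) :
    ∀ x, rot (m₁ := m₁) (m₂ := m₂) p (m₂ x) = m₂ (rot (m₁ := m₁) (m₂ := m₂) p x) := by
  have hm1inv : m₁⁻¹ = m₁ := inv_eq_of_mul_eq_one_right hm1
  have hm2inv : m₂⁻¹ = m₂ := inv_eq_of_mul_eq_one_right hm2
  have hcz : ∀ z, (m₂ * m₁ : Perm (Fin n)) z = m₂ (m₁ z) := fun z =>
    Equiv.Perm.mul_apply _ _ _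
  have hcinv : ∀ z, (m₂ * m₁ : Perm (Fin n))⁻¹ z = m₁ (m₂ z) := by
    intro z
    rw [mul_inv_rev, hm1inv, hm2inv, Equiv.Perm.mul_apply]
  intro x
  rw [rot_apply, rot_apply]
  by_cases h : (m₂ * m₁).SameCycle p x
  · have t1 : (m₂ * m₁).SameCycle (m₁ p) (m₂ x) := sc_A2 hm1 hm2 hi1 h
    have t2 : ¬ (m₂ * m₁).SameCycle p (m₂ x) := fun h' => hd (h'.trans t1.symm)
    rw [if_pos h, if_neg t2, if_pos t1, hcinv, hcz, hi2, hi2]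
  · by_cases h2 : (m₂ * m₁).SameCycle (m₁ p) x
    · have t1 : (m₂ * m₁).SameCycle p (m₂ x) := sc_B2 hm1 hm2 h2
      rw [if_neg h, if_pos h2, if_pos t1, hcz, hcinv]
    · have t1 : ¬ (m₂ * m₁).SameCycle p (m₂ x) := fun h' => by
        have := sc_A2 hm1 hm2 hi1 h'
        rw [hi2] at this
        exact h2 this
      have t2 : ¬ (m₂ * m₁).SameCycle (m₁ p) (m₂ x) := fun h' => by
        have := sc_B2 hm1 hm2 h'
        rw [hi2] at this
        exact h this
      rw [if_neg h, if_neg h2, if_neg t1, if_neg t2]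

end Rotation

/-- Any two partitions into blocks of size 2 admit a common nontrivial stabilising
permutation. -/
theorem part2 (a : ℕ) (ha : 4 ≤ a)
    (P₁ P₂ : Finpartition (Finset.univ : Finset (Fin (a * 2))))
    (hb₁ : IsBlockPartition a 2 P₁) (hb₂ : IsBlockPartition a 2 P₂) :
    ∃ g : Perm (Fin (a * 2)), g ≠ 1 ∧
      StabilizesPartition g P₁ ∧ StabilizesPartition g P₂ := by
  haveI : NeZero (a * 2) := ⟨by omega⟩
  set m₁ : Perm (Fin (a * 2)) := involOf P₁ hb₁.2 with hm₁def
  set m₂ : Perm (Fin (a * 2)) := involOf P₂ hb₂.2 with hm₂def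
  have hfp1 : ∀ x, m₁ x ≠ x := involOf_fpf P₁ hb₁.2
  have hfp2 : ∀ x, m₂ x ≠ x := involOf_fpf P₂ hb₂.2
  have hi1 : ∀ x, m₁ (m₁ x) = x := involOf_invol P₁ hb₁.2
  have hi2 : ∀ x, m₂ (m₂ x) = x := involOf_invol P₂ hb₂.2
  have hm1 : m₁ * m₁ = 1 := Equiv.ext fun x => hi1 x
  have hm2 : m₂ * m₂ = 1 := Equiv.ext fun x => hi2 x
  have hmem1 : ∀ x, ({x, m₁ x} : Finset (Fin (a * 2))) ∈ P₁.parts :=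
    pair_mem_parts P₁ hb₁.2
  have hmem2 : ∀ x, ({x, m₂ x} : Finset (Fin (a * 2))) ∈ P₂.parts :=
    pair_mem_parts P₂ hb₂.2
  have hrep1 : ∀ B ∈ P₁.parts, ∃ x, B = {x, m₁ x} := fun B hB =>
    parts_eq_pairs P₁ hb₁.2 hB
  have hrep2 : ∀ B ∈ P₂.parts, ∃ x, B = {x, m₂ x} := fun B hB =>
    parts_eq_pairs P₂ hb₂.2 hB
  by_cases hc0 : m₁ 0 = m₂ 0
  · refine ⟨Equiv.swap 0 (m₁ 0), ?_, ?_, ?_⟩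
    · intro h
      have h0 := congrArg (fun q : Perm (Fin (a * 2)) => q 0) h
      simp only [Equiv.swap_apply_left, Equiv.Perm.one_apply] at h0
      exact hfp1 0 h0
    · exact stabilizes_of_comm hrep1 hmem1 (swap_comm_invol hi1 0)
    · have hsw : Equiv.swap (0 : Fin (a * 2)) (m₁ 0) = Equiv.swap 0 (m₂ 0) := by rw [hc0]
      rw [hsw]
      exact stabilizes_of_comm hrep2 hmem2 (swap_comm_invol hi2 0)
  · have hd : ¬ (m₂ * m₁).SameCycle 0 (m₁ 0) :=
      not_sameCycle_base hm1 hm2 hfp1 hfp2 0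
    refine ⟨rot (m₁ := m₁) (m₂ := m₂) 0, ?_, ?_, ?_⟩
    · intro h
      have h0 := congrArg (fun q : Perm (Fin (a * 2)) => q 0) h
      simp only [Equiv.Perm.one_apply] at h0
      rw [rot_apply, if_pos (Equiv.Perm.SameCycle.refl _ _)] at h0
      apply hc0
      have h1 := congrArg m₂ h0
      rwa [Equiv.Perm.mul_apply, hi2] at h1
    · exact stabilizes_of_comm hrep1 hmem1 (rot_comm₁ hm1 hm2 hi1 hi2 hd)
    · exact stabilizes_of_comm hrep2 hmem2 (rot_comm₂ hm1 hm2 hi1 hi2 hd)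

section PartOne

variable {n : ℕ} [NeZero n]

/-- Parity ring hom. -/
def par (hn : 2 ∣ n) : ZMod n →+* ZMod 2 := ZMod.castHom hn (ZMod 2)

variable (hn : 2 ∣ n)

lemma zmod2_cases (u : ZMod 2) : u = 0 ∨ u = 1 := by revert u; decide

lemma zmod_num_ne (h8 : 8 ≤ n) {i j : ℕ} (hi : i < 8) (hj : j < 8) (hij : i ≠ j) :
    (i : ZMod n) ≠ (j : ZMod n) := fun h => hij (by
  rw [← ZMod.val_cast_of_lt (lt_of_lt_of_le hi h8),
    ← ZMod.val_cast_of_lt (lt_of_lt_of_le hj h8), h])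

/-- First matching: `x ↔ x+1` for even `x`. -/
def mu1 : ZMod n → ZMod n := fun x => if par hn x = 0 then x + 1 else x - 1

/-- Second matching: `x ↔ x-1` for even `x`. -/
def mu2 : ZMod n → ZMod n := fun x => if par hn x = 0 then x - 1 else x + 1

/-- Third matching: `(0 2)(1 5)(3 4)` and `x ↔ x+1` (even `x`) elsewhere. -/
def mu3 : ZMod n → ZMod n := fun x =>
  if x = 0 then 2 else if x = 2 then 0 else
  if x = 1 then 5 else if x = 5 then 1 else
  if x = 3 then 4 else if x = 4 then 3 else mu1 hn x

lemma par_add_one (x : ZMod n) : par hn (x + 1) = par hn x + 1 := by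
  rw [map_add, map_one]

lemma par_sub_one (x : ZMod n) : par hn (x - 1) = par hn x - 1 := by
  rw [map_sub, map_one]

lemma par_ofNat (k : ℕ) : par hn ((k : ℕ) : ZMod n) = (k : ZMod 2) := map_natCast _ k

lemma mu1_even {x : ZMod n} (hx : par hn x = 0) : mu1 hn x = x + 1 := if_pos hx

lemma mu1_odd {x : ZMod n} (hx : par hn x = 1) : mu1 hn x = x - 1 :=
  if_neg (by rw [hx]; decide)

lemma mu2_even {x : ZMod n} (hx : par hn x = 0) : mu2 hn x = x - 1 := if_pos hx

lemma mu2_odd {x : ZMod n} (hx : par hn x = 1) : mu2 hn x = x + 1 :=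
  if_neg (by rw [hx]; decide)

lemma mu1_involutive : Function.Involutive (mu1 hn) := by
  intro x
  rcases zmod2_cases (par hn x) with hx | hx
  · rw [mu1_even hn hx, mu1_odd hn (by rw [par_add_one, hx]; decide), add_sub_cancel_right]
  · rw [mu1_odd hn hx, mu1_even hn (by rw [par_sub_one, hx]; decide), sub_add_cancel]

lemma mu2_involutive : Function.Involutive (mu2 hn) := by
  intro x
  rcases zmod2_cases (par hn x) with hx | hx
  · rw [mu2_even hn hx, mu2_odd hn (by rw [par_sub_one, hx]; decide), sub_add_cancel]
  · rw [mu2_odd hn hx, mu2_even hn (by rw [par_add_one, hx]; decide), add_sub_cancel_right]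

section Numerals

variable (h8 : 8 ≤ n)
include h8

lemma num_ne_01 : (0 : ZMod n) ≠ 1 := by
  have := zmod_num_ne h8 (i := 0) (j := 1) (by norm_num) (by norm_num) (by norm_num)
  exact_mod_cast this
lemma num_ne_02 : (0 : ZMod n) ≠ 2 := by
  have := zmod_num_ne h8 (i := 0) (j := 2) (by norm_num) (by norm_num) (by norm_num)
  exact_mod_cast this
lemma num_ne_03 : (0 : ZMod n) ≠ 3 := by
  have := zmod_num_ne h8 (i := 0) (j := 3) (by norm_num) (by norm_num) (by norm_num)
  exact_mod_cast this
lemma num_ne_04 : (0 : ZMod n) ≠ 4 := by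
  have := zmod_num_ne h8 (i := 0) (j := 4) (by norm_num) (by norm_num) (by norm_num)
  exact_mod_cast this
lemma num_ne_05 : (0 : ZMod n) ≠ 5 := by
  have := zmod_num_ne h8 (i := 0) (j := 5) (by norm_num) (by norm_num) (by norm_num)
  exact_mod_cast this
lemma num_ne_06 : (0 : ZMod n) ≠ 6 := by
  have := zmod_num_ne h8 (i := 0) (j := 6) (by norm_num) (by norm_num) (by norm_num)
  exact_mod_cast this
lemma num_ne_12 : (1 : ZMod n) ≠ 2 := by
  have := zmod_num_ne h8 (i := 1) (j := 2) (by norm_num) (by norm_num) (by norm_num)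
  exact_mod_cast this
lemma num_ne_13 : (1 : ZMod n) ≠ 3 := by
  have := zmod_num_ne h8 (i := 1) (j := 3) (by norm_num) (by norm_num) (by norm_num)
  exact_mod_cast this
lemma num_ne_14 : (1 : ZMod n) ≠ 4 := by
  have := zmod_num_ne h8 (i := 1) (j := 4) (by norm_num) (by norm_num) (by norm_num)
  exact_mod_cast this
lemma num_ne_15 : (1 : ZMod n) ≠ 5 := by
  have := zmod_num_ne h8 (i := 1) (j := 5) (by norm_num) (by norm_num) (by norm_num)
  exact_mod_cast this
lemma num_ne_23 : (2 : ZMod n) ≠ 3 := by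
  have := zmod_num_ne h8 (i := 2) (j := 3) (by norm_num) (by norm_num) (by norm_num)
  exact_mod_cast this
lemma num_ne_24 : (2 : ZMod n) ≠ 4 := by
  have := zmod_num_ne h8 (i := 2) (j := 4) (by norm_num) (by norm_num) (by norm_num)
  exact_mod_cast this
lemma num_ne_25 : (2 : ZMod n) ≠ 5 := by
  have := zmod_num_ne h8 (i := 2) (j := 5) (by norm_num) (by norm_num) (by norm_num)
  exact_mod_cast this
lemma num_ne_34 : (3 : ZMod n) ≠ 4 := by
  have := zmod_num_ne h8 (i := 3) (j := 4) (by norm_num) (by norm_num) (by norm_num)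
  exact_mod_cast this
lemma num_ne_35 : (3 : ZMod n) ≠ 5 := by
  have := zmod_num_ne h8 (i := 3) (j := 5) (by norm_num) (by norm_num) (by norm_num)
  exact_mod_cast this
lemma num_ne_45 : (4 : ZMod n) ≠ 5 := by
  have := zmod_num_ne h8 (i := 4) (j := 5) (by norm_num) (by norm_num) (by norm_num)
  exact_mod_cast this
lemma num_ne_36 : (3 : ZMod n) ≠ 6 := by
  have := zmod_num_ne h8 (i := 3) (j := 6) (by norm_num) (by norm_num) (by norm_num)
  exact_mod_cast this
lemma num_ne_17 : (1 : ZMod n) ≠ 7 := by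
  have := zmod_num_ne h8 (i := 1) (j := 7) (by norm_num) (by norm_num) (by norm_num)
  exact_mod_cast this

end Numerals

lemma par_two : par hn (2 : ZMod n) = 0 := by
  rw [show (2 : ZMod n) = ((2 : ℕ) : ZMod n) by norm_cast, par_ofNat]; decide
lemma par_three : par hn (3 : ZMod n) = 1 := by
  rw [show (3 : ZMod n) = ((3 : ℕ) : ZMod n) by norm_cast, par_ofNat]; decide
lemma par_four : par hn (4 : ZMod n) = 0 := by
  rw [show (4 : ZMod n) = ((4 : ℕ) : ZMod n) by norm_cast, par_ofNat]; decide
lemma par_five : par hn (5 : ZMod n) = 1 := by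
  rw [show (5 : ZMod n) = ((5 : ℕ) : ZMod n) by norm_cast, par_ofNat]; decide
lemma par_six : par hn (6 : ZMod n) = 0 := by
  rw [show (6 : ZMod n) = ((6 : ℕ) : ZMod n) by norm_cast, par_ofNat]; decide

lemma one_ne_zero' (h8 : 8 ≤ n) : (1 : ZMod n) ≠ 0 := fun h => num_ne_01 h8 h.symm

lemma mu1_fpf (h8 : 8 ≤ n) (x : ZMod n) : mu1 hn x ≠ x := by
  rcases zmod2_cases (par hn x) with hx | hx
  · rw [mu1_even hn hx]
    intro h
    exact one_ne_zero' h8 (by linear_combination h)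
  · rw [mu1_odd hn hx]
    intro h
    exact one_ne_zero' h8 (by linear_combination -h)

lemma mu2_fpf (h8 : 8 ≤ n) (x : ZMod n) : mu2 hn x ≠ x := by
  rcases zmod2_cases (par hn x) with hx | hx
  · rw [mu2_even hn hx]
    intro h
    exact one_ne_zero' h8 (by linear_combination -h)
  · rw [mu2_odd hn hx]
    intro h
    exact one_ne_zero' h8 (by linear_combination h)

lemma mu3_eval0 : mu3 hn (0 : ZMod n) = 2 := if_pos rfl
lemma mu3_eval2 (h8 : 8 ≤ n) : mu3 hn (2 : ZMod n) = 0 := by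
  rw [mu3, if_neg (fun h => num_ne_02 h8 h.symm), if_pos rfl]
lemma mu3_eval1 (h8 : 8 ≤ n) : mu3 hn (1 : ZMod n) = 5 := by
  rw [mu3, if_neg (fun h => num_ne_01 h8 h.symm), if_neg (num_ne_12 h8), if_pos rfl]
lemma mu3_eval5 (h8 : 8 ≤ n) : mu3 hn (5 : ZMod n) = 1 := by
  rw [mu3, if_neg (fun h => num_ne_05 h8 h.symm), if_neg (fun h => num_ne_25 h8 h.symm),
    if_neg (fun h => num_ne_15 h8 h.symm), if_pos rfl]
lemma mu3_eval3 (h8 : 8 ≤ n) : mu3 hn (3 : ZMod n) = 4 := by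
  rw [mu3, if_neg (fun h => num_ne_03 h8 h.symm), if_neg (fun h => num_ne_23 h8 h.symm),
    if_neg (fun h => num_ne_13 h8 h.symm), if_neg (num_ne_35 h8), if_pos rfl]
lemma mu3_eval4 (h8 : 8 ≤ n) : mu3 hn (4 : ZMod n) = 3 := by
  rw [mu3, if_neg (fun h => num_ne_04 h8 h.symm), if_neg (fun h => num_ne_24 h8 h.symm),
    if_neg (fun h => num_ne_14 h8 h.symm), if_neg (num_ne_45 h8),
    if_neg (fun h => num_ne_34 h8 h.symm), if_pos rfl]
lemma mu3_else {x : ZMod n} (hx0 : x ≠ 0) (hx2 : x ≠ 2) (hx1 : x ≠ 1) (hx5 : x ≠ 5)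
    (hx3 : x ≠ 3) (hx4 : x ≠ 4) : mu3 hn x = mu1 hn x := by
  rw [mu3, if_neg hx0, if_neg hx2, if_neg hx1, if_neg hx5, if_neg hx3, if_neg hx4]

lemma mu1_notin (h8 : 8 ≤ n) {x : ZMod n} (hx0 : x ≠ 0) (hx2 : x ≠ 2) (hx1 : x ≠ 1)
    (hx5 : x ≠ 5) (hx3 : x ≠ 3) (hx4 : x ≠ 4) :
    mu1 hn x ≠ 0 ∧ mu1 hn x ≠ 2 ∧ mu1 hn x ≠ 1 ∧ mu1 hn x ≠ 5 ∧
    mu1 hn x ≠ 3 ∧ mu1 hn x ≠ 4 := by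
  rcases zmod2_cases (par hn x) with hx | hx
  · rw [mu1_even hn hx]
    refine ⟨?_, ?_, ?_, ?_, ?_, ?_⟩ <;> intro h
    · -- x + 1 = 0 : parity contradiction
      have := par_add_one hn x
      rw [h, hx, map_zero] at this
      exact absurd this.symm (by decide)
    · exact hx1 (by linear_combination h)
    · exact hx0 (by linear_combination h)
    · exact hx4 (by linear_combination h)
    · exact hx2 (by linear_combination h)
    · exact hx3 (by linear_combination h)
  · rw [mu1_odd hn hx]
    refine ⟨?_, ?_, ?_, ?_, ?_, ?_⟩ <;> intro h
    · exact hx1 (by linear_combination h)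
    · exact hx3 (by linear_combination h)
    · exact hx2 (by linear_combination h)
    · -- x - 1 = 5 → x = 6, parity contradiction
      have hx6 : x = 6 := by linear_combination h
      rw [hx6, par_six] at hx
      exact absurd hx (by decide)
    · exact hx4 (by linear_combination h)
    · exact hx5 (by linear_combination h)

lemma mu3_involutive (h8 : 8 ≤ n) : Function.Involutive (mu3 hn) := by
  intro x
  by_cases hx0 : x = 0
  · rw [hx0, mu3_eval0, mu3_eval2 hn h8]
  by_cases hx2 : x = 2
  · rw [hx2, mu3_eval2 hn h8, mu3_eval0]
  by_cases hx1 : x = 1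
  · rw [hx1, mu3_eval1 hn h8, mu3_eval5 hn h8]
  by_cases hx5 : x = 5
  · rw [hx5, mu3_eval5 hn h8, mu3_eval1 hn h8]
  by_cases hx3 : x = 3
  · rw [hx3, mu3_eval3 hn h8, mu3_eval4 hn h8]
  by_cases hx4 : x = 4
  · rw [hx4, mu3_eval4 hn h8, mu3_eval3 hn h8]
  obtain ⟨h0', h2', h1', h5', h3', h4'⟩ := mu1_notin hn h8 hx0 hx2 hx1 hx5 hx3 hx4
  rw [mu3_else hn hx0 hx2 hx1 hx5 hx3 hx4, mu3_else hn h0' h2' h1' h5' h3' h4']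
  exact mu1_involutive hn x

lemma mu3_fpf (h8 : 8 ≤ n) (x : ZMod n) : mu3 hn x ≠ x := by
  by_cases hx0 : x = 0
  · rw [hx0, mu3_eval0]; exact fun h => num_ne_02 h8 h.symm
  by_cases hx2 : x = 2
  · rw [hx2, mu3_eval2 hn h8]; exact num_ne_02 h8
  by_cases hx1 : x = 1
  · rw [hx1, mu3_eval1 hn h8]; exact fun h => num_ne_15 h8 h.symm
  by_cases hx5 : x = 5
  · rw [hx5, mu3_eval5 hn h8]; exact num_ne_15 h8
  by_cases hx3 : x = 3
  · rw [hx3, mu3_eval3 hn h8]; exact fun h => num_ne_34 h8 h.symm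
  by_cases hx4 : x = 4
  · rw [hx4, mu3_eval4 hn h8]; exact num_ne_34 h8
  rw [mu3_else hn hx0 hx2 hx1 hx5 hx3 hx4]
  exact mu1_fpf hn h8 x


lemma par_even_nat (j : ℕ) : par hn ((2 * j : ℕ) : ZMod n) = 0 := by
  rw [par_ofNat]
  push_cast
  rw [show (2 : ZMod 2) = 0 by decide, zero_mul]

lemma par_odd_nat (j : ℕ) : par hn ((2 * j + 1 : ℕ) : ZMod n) = 1 := by
  rw [par_ofNat]
  push_cast
  rw [show (2 : ZMod 2) = 0 by decide, zero_mul, zero_add]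

lemma part1_core (h8 : 8 ≤ n) (g : Perm (ZMod n))
    (h1 : ∀ x, g (mu1 hn x) = mu1 hn (g x))
    (h2 : ∀ x, g (mu2 hn x) = mu2 hn (g x))
    (h3 : ∀ x, g (mu3 hn x) = mu3 hn (g x)) : g = 1 := by
  set y : ZMod n := g 0 with hy
  have hpar0 : par hn (0 : ZMod n) = 0 := map_zero _
  rcases zmod2_cases (par hn y) with hpy | hpy
  · -- `g` is the translation by `y`
    have key : ∀ j : ℕ, g ((2 * j : ℕ) : ZMod n) = ((2 * j : ℕ) : ZMod n) + y ∧
        g ((2 * j + 1 : ℕ) : ZMod n) = ((2 * j + 1 : ℕ) : ZMod n) + y := by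
      intro j
      induction j with
      | zero =>
        constructor
        · have hc : ((2 * 0 : ℕ) : ZMod n) = 0 := by norm_num
          rw [hc, zero_add, hy]
        · have hc : ((2 * 0 + 1 : ℕ) : ZMod n) = 0 + 1 := by norm_num
          have hmu := h1 0
          rw [mu1_even hn hpar0, mu1_even hn (by rw [← hy]; exact hpy)] at hmu
          rw [hc, hmu, ← hy]
          ring
      | succ j ih =>
        obtain ⟨ihe, iho⟩ := ih
        have hodd : par hn ((2 * j + 1 : ℕ) : ZMod n) = 1 := par_odd_nat hn j
        have e1 : ((2 * (j + 1) : ℕ) : ZMod n) = ((2 * j + 1 : ℕ) : ZMod n) + 1 := by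
          push_cast; ring
        have hE : g ((2 * (j + 1) : ℕ) : ZMod n) = ((2 * (j + 1) : ℕ) : ZMod n) + y := by
          have hmu := h2 ((2 * j + 1 : ℕ) : ZMod n)
          rw [mu2_odd hn hodd, iho,
            mu2_odd hn (by rw [map_add, hodd, hpy]; decide)] at hmu
          rw [e1, hmu]
          ring
        refine ⟨hE, ?_⟩
        have heven : par hn ((2 * (j + 1) : ℕ) : ZMod n) = 0 := par_even_nat hn (j + 1)
        have e2 : ((2 * (j + 1) + 1 : ℕ) : ZMod n) = ((2 * (j + 1) : ℕ) : ZMod n) + 1 := by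
          push_cast; ring
        have hmu := h1 ((2 * (j + 1) : ℕ) : ZMod n)
        rw [mu1_even hn heven, hE,
          mu1_even hn (by rw [map_add, heven, hpy]; decide)] at hmu
        rw [e2, hmu]
        ring
    have htrans : ∀ z : ZMod n, g z = z + y := by
      intro z
      have hz : ((z.val : ℕ) : ZMod n) = z := ZMod.natCast_rightInverse z
      rcases Nat.even_or_odd z.val with ⟨j, hj⟩ | ⟨j, hj⟩
      · have hkey := (key j).1
        rw [show 2 * j = z.val by omega, hz] at hkey
        exact hkey
      · have hkey := (key j).2
        rw [show 2 * j + 1 = z.val by omega, hz] at hkey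
        exact hkey
    have hg2 : g 2 = 2 + y := htrans 2
    have h30 := h3 0
    rw [mu3_eval0 hn, hg2, ← hy] at h30
    -- h30 : 2 + y = mu3 hn y
    by_cases hy0 : y = 0
    · apply Equiv.ext
      intro z
      rw [htrans z, hy0, add_zero, Equiv.Perm.one_apply]
    exfalso
    by_cases hy2 : y = 2
    · rw [hy2, mu3_eval2 hn h8] at h30
      exact num_ne_04 h8 (by linear_combination -h30)
    by_cases hy4 : y = 4
    · rw [hy4, mu3_eval4 hn h8] at h30
      exact num_ne_36 h8 (by linear_combination -h30)
    have hy1 : y ≠ 1 := fun h => by rw [h, map_one] at hpy; exact absurd hpy (by decide)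
    have hy3 : y ≠ 3 := fun h => by rw [h, par_three hn] at hpy; exact absurd hpy (by decide)
    have hy5 : y ≠ 5 := fun h => by rw [h, par_five hn] at hpy; exact absurd hpy (by decide)
    rw [mu3_else hn hy0 hy2 hy1 hy5 hy3 hy4, mu1_even hn hpy] at h30
    exact one_ne_zero' h8 (by linear_combination h30)
  · -- `g` is the reflection `z ↦ y - z`: impossible
    exfalso
    have key : ∀ j : ℕ, g ((2 * j : ℕ) : ZMod n) = y - ((2 * j : ℕ) : ZMod n) ∧
        g ((2 * j + 1 : ℕ) : ZMod n) = y - ((2 * j + 1 : ℕ) : ZMod n) := by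
      intro j
      induction j with
      | zero =>
        constructor
        · have hc : ((2 * 0 : ℕ) : ZMod n) = 0 := by norm_num
          rw [hc, sub_zero, hy]
        · have hc : ((2 * 0 + 1 : ℕ) : ZMod n) = 0 + 1 := by norm_num
          have hmu := h1 0
          rw [mu1_even hn hpar0, mu1_odd hn (by rw [← hy]; exact hpy)] at hmu
          rw [hc, hmu, ← hy]
          ring
      | succ j ih =>
        obtain ⟨ihe, iho⟩ := ih
        have hodd : par hn ((2 * j + 1 : ℕ) : ZMod n) = 1 := par_odd_nat hn j
        have e1 : ((2 * (j + 1) : ℕ) : ZMod n) = ((2 * j + 1 : ℕ) : ZMod n) + 1 := by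
          push_cast; ring
        have hE : g ((2 * (j + 1) : ℕ) : ZMod n) = y - ((2 * (j + 1) : ℕ) : ZMod n) := by
          have hmu := h2 ((2 * j + 1 : ℕ) : ZMod n)
          rw [mu2_odd hn hodd, iho,
            mu2_even hn (by rw [map_sub, hodd, hpy]; decide)] at hmu
          rw [e1, hmu]
          ring
        refine ⟨hE, ?_⟩
        have heven : par hn ((2 * (j + 1) : ℕ) : ZMod n) = 0 := par_even_nat hn (j + 1)
        have e2 : ((2 * (j + 1) + 1 : ℕ) : ZMod n) = ((2 * (j + 1) : ℕ) : ZMod n) + 1 := by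
          push_cast; ring
        have hmu := h1 ((2 * (j + 1) : ℕ) : ZMod n)
        rw [mu1_even hn heven, hE,
          mu1_odd hn (by rw [map_sub, heven, hpy]; decide)] at hmu
        rw [e2, hmu]
        ring
    have htrans : ∀ z : ZMod n, g z = y - z := by
      intro z
      have hz : ((z.val : ℕ) : ZMod n) = z := ZMod.natCast_rightInverse z
      rcases Nat.even_or_odd z.val with ⟨j, hj⟩ | ⟨j, hj⟩
      · have hkey := (key j).1
        rw [show 2 * j = z.val by omega, hz] at hkey
        exact hkey
      · have hkey := (key j).2
        rw [show 2 * j + 1 = z.val by omega, hz] at hkey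
        exact hkey
    have hg2 : g 2 = y - 2 := htrans 2
    have h30 := h3 0
    rw [mu3_eval0 hn, hg2, ← hy] at h30
    -- h30 : y - 2 = mu3 hn y
    have hy0 : y ≠ 0 := fun h => by rw [h, map_zero] at hpy; exact absurd hpy (by decide)
    have hy2 : y ≠ 2 := fun h => by rw [h, par_two hn] at hpy; exact absurd hpy (by decide)
    have hy4 : y ≠ 4 := fun h => by rw [h, par_four hn] at hpy; exact absurd hpy (by decide)
    by_cases hy1 : y = 1
    · rw [hy1, mu3_eval1 hn h8] at h30
      exact num_ne_17 h8 (by linear_combination h30)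
    by_cases hy3 : y = 3
    · rw [hy3, mu3_eval3 hn h8] at h30
      exact num_ne_03 h8 (by linear_combination h30)
    by_cases hy5 : y = 5
    · rw [hy5, mu3_eval5 hn h8] at h30
      exact num_ne_02 h8 (by linear_combination -h30)
    rw [mu3_else hn hy0 hy2 hy1 hy5 hy3 hy4, mu1_odd hn hpy] at h30
    exact one_ne_zero' h8 (by linear_combination -h30)

end PartOne

lemma transport_comm {α β : Type*} (e : α ≃ β) (g : Equiv.Perm β) (f : α → α)
    (hc : ∀ x, g (e (f (e.symm x))) = e (f (e.symm (g x)))) (z : α) :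
    e.symm (g (e (f z))) = f (e.symm (g (e z))) := by
  have h := hc (e z)
  rw [Equiv.symm_apply_apply] at h
  rw [h, Equiv.symm_apply_apply]

lemma permCongr_fpf {α : Type*} {m : ℕ} (e : α ≃ Fin m) {f : α → α}
    (hf : Function.Involutive f) (hfp : ∀ x, f x ≠ x) :
    ∀ x, (e.permCongr hf.toPerm) x ≠ x := by
  intro x h
  rw [Equiv.permCongr_apply] at h
  have h2 := congrArg e.symm h
  rw [Equiv.symm_apply_apply] at h2
  exact hfp _ h2

lemma permCongr_invol {α : Type*} {m : ℕ} (e : α ≃ Fin m) {f : α → α}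
    (hf : Function.Involutive f) :
    ∀ x, (e.permCongr hf.toPerm) ((e.permCongr hf.toPerm) x) = x := by
  intro x
  rw [Equiv.permCongr_apply, Equiv.permCongr_apply, Equiv.symm_apply_apply]
  show e (f (f (e.symm x))) = x
  rw [hf (e.symm x), Equiv.apply_symm_apply]

lemma permCongr_comm {α : Type*} {m : ℕ} (e : α ≃ Fin m) (g : Equiv.Perm (Fin m))
    {f : α → α} (hf : Function.Involutive f)
    (hc : ∀ x, g ((e.permCongr hf.toPerm) x) = (e.permCongr hf.toPerm) (g x)) :
    ∀ z, (e.symm.permCongr g) (f z) = f ((e.symm.permCongr g) z) := by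
  have hG : ∀ z, (e.symm.permCongr g) z = e.symm (g (e z)) := fun z => by
    rw [Equiv.permCongr_apply, Equiv.symm_symm]
  have hc' : ∀ x, g (e (f (e.symm x))) = e (f (e.symm (g x))) := by
    intro x
    have := hc x
    rwa [Equiv.permCongr_apply, Equiv.permCongr_apply] at this
  intro z
  rw [hG, hG]
  exact transport_comm e g f hc' z

/-- Three block partitions with trivial common stabiliser. -/
theorem part1 (a : ℕ) (ha : 4 ≤ a) :
    ∃ P₁ P₂ P₃ : Finpartition (Finset.univ : Finset (Fin (a * 2))),
      IsBlockPartition a 2 P₁ ∧ IsBlockPartition a 2 P₂ ∧ IsBlockPartition a 2 P₃ ∧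
      ∀ g : Equiv.Perm (Fin (a * 2)),
        StabilizesPartition g P₁ → StabilizesPartition g P₂ →
        StabilizesPartition g P₃ → g = 1 := by
  haveI : NeZero (a * 2) := ⟨by omega⟩
  have hn : (2 : ℕ) ∣ a * 2 := ⟨a, by ring⟩
  have h8 : 8 ≤ a * 2 := by omega
  let e : ZMod (a * 2) ≃ Fin (a * 2) := Fintype.equivFinOfCardEq (ZMod.card _)
  let M1 := e.permCongr (mu1_involutive hn).toPerm
  let M2 := e.permCongr (mu2_involutive hn).toPerm
  let M3 := e.permCongr (mu3_involutive hn h8).toPerm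
  have hM1fp := permCongr_fpf e (mu1_involutive hn) (mu1_fpf hn h8)
  have hM2fp := permCongr_fpf e (mu2_involutive hn) (mu2_fpf hn h8)
  have hM3fp := permCongr_fpf e (mu3_involutive hn h8) (mu3_fpf hn h8)
  have hM1inv := permCongr_invol e (mu1_involutive hn)
  have hM2inv := permCongr_invol e (mu2_involutive hn)
  have hM3inv := permCongr_invol e (mu3_involutive hn h8)
  refine ⟨pairPartition M1 hM1fp hM1inv, pairPartition M2 hM2fp hM2inv,
    pairPartition M3 hM3fp hM3inv,
    isBlockPartition_pairPartition _ _ _, isBlockPartition_pairPartition _ _ _,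
    isBlockPartition_pairPartition _ _ _, ?_⟩
  intro g hs1 hs2 hs3
  have hc1 := comm_of_stabilizes hM1fp (mem_pairPartition M1 hM1fp hM1inv) hs1
  have hc2 := comm_of_stabilizes hM2fp (mem_pairPartition M2 hM2fp hM2inv) hs2
  have hc3 := comm_of_stabilizes hM3fp (mem_pairPartition M3 hM3fp hM3inv) hs3
  have hcc1 := permCongr_comm e g (mu1_involutive hn) hc1
  have hcc2 := permCongr_comm e g (mu2_involutive hn) hc2
  have hcc3 := permCongr_comm e g (mu3_involutive hn h8) hc3
  have hG : e.symm.permCongr g = 1 := part1_core hn h8 _ hcc1 hcc2 hcc3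
  apply Equiv.ext
  intro x
  have hx := congrArg (fun q : Equiv.Perm (ZMod (a * 2)) => q (e.symm x)) hG
  simp only [Equiv.Perm.one_apply] at hx
  rw [Equiv.permCongr_apply, Equiv.symm_symm, Equiv.apply_symm_apply] at hx
  have hgx := e.symm.injective hx
  simpa using hgx

end BaseAux

/-- For `a ≥ 4` and `b = 2`, the symmetric group `Sym(2a)` acting on
partitions of `{1, …, 2a}` into `a` blocks of size `2` has base size exactly `3`:
there are three such partitions with trivial common stabiliser, but any two such
partitions have a nontrivial common stabiliser. -/
theorem base_size_partitions_two_blocks (a : ℕ) (ha : 4 ≤ a) :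
    (∃ P₁ P₂ P₃ : Finpartition (Finset.univ : Finset (Fin (a * 2))),
      IsBlockPartition a 2 P₁ ∧ IsBlockPartition a 2 P₂ ∧ IsBlockPartition a 2 P₃ ∧
      ∀ g : Equiv.Perm (Fin (a * 2)),
        StabilizesPartition g P₁ → StabilizesPartition g P₂ →
        StabilizesPartition g P₃ → g = 1) ∧
    (∀ P₁ P₂ : Finpartition (Finset.univ : Finset (Fin (a * 2))),
      IsBlockPartition a 2 P₁ → IsBlockPartition a 2 P₂ →
      ∃ g : Equiv.Perm (Fin (a * 2)), g ≠ 1 ∧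
        StabilizesPartition g P₁ ∧ StabilizesPartition g P₂) :=
  ⟨BaseAux.part1 a ha, fun P₁ P₂ hb₁ hb₂ => BaseAux.part2 a ha P₁ P₂ hb₁ hb₂⟩
end

section
/- Let G be a finite permutation group on a set Ω with point stabilizer H of a fixed point (G transitive). If the sum over representatives x_1,...,x_k of the conjugacy classes of elements of prime order in G of |x_i^G| · fpr(x_i)^c is strictly less than 1, where fpr(x) = |x^G ∩ H|/|x^G|, then G admits a base of size at most c on Ω. -/
open scoped Classical

section Aux

variable {G Ω : Type*} [Group G] [Fintype G] [Fintype Ω] [MulAction G Ω]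
    [MulAction.IsPretransitive G Ω]

private lemma isConj_orderOf_eq {a b : G} (h : IsConj a b) : orderOf a = orderOf b := by
  obtain ⟨c, hc⟩ := h
  exact SemiconjBy.orderOf_eq (c : G) hc

/-- fixed points of `z` as a finset -/
private noncomputable def Fixf (z : G) : Finset Ω := Finset.univ.filter (fun α => z • α = α)

private lemma fix_card_conj {g z : G} (h : IsConj g z) :
    (Fixf (Ω := Ω) z).card = (Fixf (Ω := Ω) g).card := by
  rw [isConj_iff] at h
  obtain ⟨u, rfl⟩ := h
  apply Finset.card_bij (fun α _ => u⁻¹ • α)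
  · intro α hα
    simp only [Fixf, Finset.mem_filter, Finset.mem_univ, true_and] at hα ⊢
    have : (u * g * u⁻¹) • α = α := hα
    calc g • u⁻¹ • α = u⁻¹ • (u * g * u⁻¹) • α := by
          simp [mul_smul]
      _ = u⁻¹ • α := by rw [this]
  · intro α _ β _ h
    exact smul_left_cancel u⁻¹ h
  · intro β hβ
    refine ⟨u • β, ?_, by simp⟩
    simp only [Fixf, Finset.mem_filter, Finset.mem_univ, true_and] at hβ ⊢
    calc (u * g * u⁻¹) • u • β = u • g • β := by simp [mul_smul]
      _ = u • β := by rw [hβ]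

/-- key double counting: |g^G| * |Fix g| = |Ω| * |g^G ∩ Stab ω| -/
private lemma double_count (g : G) (ω : Ω) :
    (Finset.univ.filter (fun z => IsConj g z)).card * (Fixf (Ω := Ω) g).card
      = Fintype.card Ω *
        (Finset.univ.filter (fun z => IsConj g z ∧ z • ω = ω)).card := by
  set A : Finset G := Finset.univ.filter (fun z => IsConj g z) with hA
  have step1 : ∑ z ∈ A, (Fixf (Ω := Ω) z).card = A.card * (Fixf (Ω := Ω) g).card := by
    rw [Finset.sum_congr rfl (fun z hz => ?_), Finset.sum_const, smul_eq_mul]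
    have : IsConj g z := (Finset.mem_filter.mp hz).2
    exact fix_card_conj this
  have step2 : ∑ z ∈ A, (Fixf (Ω := Ω) z).card
      = ∑ α : Ω, (A.filter (fun z => z • α = α)).card := by
    simp only [Fixf, Finset.card_filter]
    exact Finset.sum_comm
  have step3 : ∀ α : Ω, (A.filter (fun z => z • α = α)).card
      = (A.filter (fun z => z • ω = ω)).card := by
    intro α
    obtain ⟨u, hu⟩ := MulAction.exists_smul_eq G ω α
    apply Finset.card_bij (fun z _ => u⁻¹ * z * u)
    · intro z hz
      simp only [hA, Finset.mem_filter, Finset.mem_univ, true_and] at hz ⊢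
      obtain ⟨h1, h2⟩ := hz
      refine ⟨h1.trans (isConj_iff.mpr ⟨u⁻¹, by group⟩), ?_⟩
      calc (u⁻¹ * z * u) • ω = u⁻¹ • z • α := by rw [mul_smul, mul_smul, hu]
        _ = u⁻¹ • α := by rw [h2]
        _ = ω := by rw [← hu]; simp
    · intro a _ b _ h
      have := mul_right_cancel h
      exact mul_left_cancel this
    · intro z hz
      refine ⟨u * z * u⁻¹, ?_, by group⟩
      simp only [hA, Finset.mem_filter, Finset.mem_univ, true_and] at hz ⊢
      obtain ⟨h1, h2⟩ := hz
      refine ⟨h1.trans (isConj_iff.mpr ⟨u, rfl⟩), ?_⟩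
      calc (u * z * u⁻¹) • α = u • z • ω := by
            rw [mul_smul, mul_smul, ← hu]; simp
        _ = u • ω := by rw [h2]
        _ = α := hu
  rw [← step1, step2, Finset.sum_congr rfl (fun α _ => step3 α), Finset.sum_const,
    smul_eq_mul, Finset.card_univ, hA, Finset.filter_filter]

end Aux

/-- the probabilistic base-size criterion of Liebeck–Shalev.
Let `G` be a finite transitive permutation group on `Ω` with point stabiliser
`H = G_ω`, and let `x₁, …, x_k` be representatives of the conjugacy classes of
elements of prime order in `G`.  If
`∑ i |xᵢᴳ| · (|xᵢᴳ ∩ H| / |xᵢᴳ|)^c < 1`, then `G` has a base of size at most `c`. -/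
theorem base_of_fixed_point_ratio_sum_lt_one
    {G Ω : Type*} [Group G] [Fintype G] [Fintype Ω] [MulAction G Ω]
    [MulAction.IsPretransitive G Ω]
    (ω : Ω) (c : ℕ) (hc : 0 < c) {k : ℕ} (x : Fin k → G)
    (hprime : ∀ i, (orderOf (x i)).Prime)
    (hdistinct : ∀ i j, i ≠ j → ¬ IsConj (x i) (x j))
    (hrep : ∀ g : G, (orderOf g).Prime → ∃ i, IsConj (x i) g)
    (hsum : ∑ i : Fin k,
        (Nat.card {y : G | IsConj (x i) y} : ℝ) *
          ((Nat.card {y : G | IsConj (x i) y ∧ y ∈ MulAction.stabilizer G ω} : ℝ) /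
            (Nat.card {y : G | IsConj (x i) y} : ℝ)) ^ c < 1) :
    ∃ s : Finset Ω, s.card ≤ c ∧
      ∀ g : G, (∀ α ∈ s, g • α = α) → g = 1 := by
  classical
  set A : Fin k → Finset G := fun i => Finset.univ.filter (fun z => IsConj (x i) z) with hA
  set F : Fin k → ℕ := fun i => (Fixf (Ω := Ω) (x i)).card with hF
  have hn : 0 < Fintype.card Ω := Fintype.card_pos_iff.mpr ⟨ω⟩
  have hApos : ∀ i, 0 < (A i).card := by
    intro i
    exact Finset.card_pos.mpr ⟨x i, Finset.mem_filter.mpr ⟨Finset.mem_univ _, IsConj.refl _⟩⟩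
  -- rewrite Nat.card expressions as finset cards
  have hcard1 : ∀ i, (Nat.card {y : G | IsConj (x i) y} : ℕ) = (A i).card := by
    intro i
    simp [Nat.card_eq_fintype_card, Fintype.card_subtype, hA]
  have hcard2 : ∀ i, (Nat.card {y : G | IsConj (x i) y ∧ y ∈ MulAction.stabilizer G ω} : ℕ)
      = (Finset.univ.filter (fun z => IsConj (x i) z ∧ z • ω = ω)).card := by
    intro i
    simp [Nat.card_eq_fintype_card, Fintype.card_subtype, MulAction.mem_stabilizer_iff]
  -- convert hsum to statement about fixed point counts
  have hratio : ∀ i, ((Finset.univ.filter (fun z => IsConj (x i) z ∧ z • ω = ω)).card : ℝ)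
      / ((A i).card : ℝ) = (F i : ℝ) / (Fintype.card Ω : ℝ) := by
    intro i
    have := double_count (Ω := Ω) (x i) ω
    rw [div_eq_div_iff (by exact_mod_cast (hApos i).ne') (by exact_mod_cast hn.ne')]
    have h2 : (Finset.univ.filter (fun z => IsConj (x i) z ∧ z • ω = ω)).card
        * Fintype.card Ω = F i * (A i).card :=
      (mul_comm _ _).trans (this.symm.trans (mul_comm _ _))
    exact_mod_cast h2
  have hsum' : (∑ i : Fin k, ((A i).card : ℝ) * ((F i : ℝ) / (Fintype.card Ω : ℝ)) ^ c) < 1 := by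
    refine lt_of_le_of_lt (le_of_eq ?_) hsum
    refine Finset.sum_congr rfl (fun i _ => ?_)
    rw [hcard1, hcard2, hratio]
  -- multiply through by |Ω|^c
  have hmain : ((∑ i : Fin k, (A i).card * F i ^ c : ℕ) : ℝ) < ((Fintype.card Ω ^ c : ℕ) : ℝ) := by
    push_cast
    have hpow : (0:ℝ) < (Fintype.card Ω : ℝ) ^ c := by positivity
    calc (∑ i : Fin k, ((A i).card : ℝ) * (F i : ℝ) ^ c)
        = (∑ i : Fin k, ((A i).card : ℝ) * ((F i : ℝ) / (Fintype.card Ω : ℝ)) ^ c)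
          * (Fintype.card Ω : ℝ) ^ c := by
          rw [Finset.sum_mul]
          refine Finset.sum_congr rfl (fun i _ => ?_)
          rw [mul_assoc, div_pow, div_mul_cancel₀]
          exact hpow.ne'
      _ < 1 * (Fintype.card Ω : ℝ) ^ c := by
          exact mul_lt_mul_of_pos_right hsum' hpow
      _ = (Fintype.card Ω : ℝ) ^ c := one_mul _
  have hmainN : (∑ i : Fin k, (A i).card * F i ^ c) < Fintype.card Ω ^ c :=
    by exact_mod_cast hmain
  -- bad tuples
  set Bad : Finset (Fin c → Ω) := Finset.univ.filter
    (fun t => ∃ z : G, (orderOf z).Prime ∧ ∀ j, z • t j = t j) with hBad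
  set P : Finset G := Finset.univ.filter (fun z => (orderOf z).Prime) with hP
  have hsub : Bad ⊆ P.biUnion (fun z => Finset.univ.filter (fun t => ∀ j, z • t j = t j)) := by
    intro t ht
    simp only [hBad, Finset.mem_filter, Finset.mem_univ, true_and] at ht
    obtain ⟨z, hz1, hz2⟩ := ht
    exact Finset.mem_biUnion.mpr ⟨z, Finset.mem_filter.mpr ⟨Finset.mem_univ _, hz1⟩,
      Finset.mem_filter.mpr ⟨Finset.mem_univ _, hz2⟩⟩
  have hfixcount : ∀ z : G,
      (Finset.univ.filter (fun t : Fin c → Ω => ∀ j, z • t j = t j)).card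
        = (Fixf (Ω := Ω) z).card ^ c := by
    intro z
    have : Finset.univ.filter (fun t : Fin c → Ω => ∀ j, z • t j = t j)
        = Fintype.piFinset (fun _ : Fin c => Fixf (Ω := Ω) z) := by
      ext t
      simp [Fixf, Fintype.mem_piFinset]
    rw [this, Fintype.card_piFinset, Finset.prod_const, Finset.card_univ, Fintype.card_fin]
  -- P is the disjoint union of the A i
  have hPU : P = Finset.univ.biUnion A := by
    ext z
    simp only [hP, hA, Finset.mem_filter, Finset.mem_univ, true_and, Finset.mem_biUnion]
    constructor
    · intro hz
      exact hrep z hz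
    · rintro ⟨i, hi⟩
      rw [← isConj_orderOf_eq hi]
      exact hprime i
  have hdisj : ∀ i ∈ Finset.univ, ∀ j ∈ Finset.univ, i ≠ j →
      Disjoint (A i) (A j) := by
    intro i _ j _ hij
    rw [Finset.disjoint_left]
    intro z hzi hzj
    have h1 : IsConj (x i) z := (Finset.mem_filter.mp hzi).2
    have h2 : IsConj (x j) z := (Finset.mem_filter.mp hzj).2
    exact hdistinct i j hij (h1.trans h2.symm)
  have hbadcard : Bad.card < Fintype.card Ω ^ c := by
    calc Bad.card ≤ (P.biUnion (fun z => Finset.univ.filter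
          (fun t : Fin c → Ω => ∀ j, z • t j = t j))).card := Finset.card_le_card hsub
      _ ≤ ∑ z ∈ P, (Finset.univ.filter
          (fun t : Fin c → Ω => ∀ j, z • t j = t j)).card := Finset.card_biUnion_le
      _ = ∑ z ∈ P, (Fixf (Ω := Ω) z).card ^ c :=
          Finset.sum_congr rfl (fun z _ => hfixcount z)
      _ = ∑ i : Fin k, ∑ z ∈ A i, (Fixf (Ω := Ω) z).card ^ c := by
          rw [hPU, Finset.sum_biUnion]
          exact fun i hi j hj hij => hdisj i hi j hj hij
      _ = ∑ i : Fin k, (A i).card * F i ^ c := by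
          refine Finset.sum_congr rfl (fun i _ => ?_)
          rw [Finset.sum_congr rfl (fun z hz => ?_), Finset.sum_const, smul_eq_mul]
          have : IsConj (x i) z := (Finset.mem_filter.mp hz).2
          rw [hF, fix_card_conj this]
      _ < Fintype.card Ω ^ c := hmainN
  -- pick a good tuple
  have hlt : Bad.card < (Finset.univ : Finset (Fin c → Ω)).card := by
    rwa [Finset.card_univ, Fintype.card_fun, Fintype.card_fin]
  have hne : (Finset.univ \ Bad).Nonempty := by
    rw [Finset.sdiff_nonempty]
    intro h
    exact absurd (Finset.card_le_card h) (not_le.mpr hlt)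
  obtain ⟨t, ht⟩ := hne
  have htbad : t ∉ Bad := (Finset.mem_sdiff.mp ht).2
  refine ⟨Finset.image t Finset.univ, ?_, ?_⟩
  · calc (Finset.image t Finset.univ).card ≤ (Finset.univ : Finset (Fin c)).card :=
        Finset.card_image_le
      _ = c := by rw [Finset.card_univ, Fintype.card_fin]
  · intro g hg
    by_contra hg1
    have horder : orderOf g ≠ 1 := fun h => hg1 (orderOf_eq_one_iff.mp h)
    set p := (orderOf g).minFac with hp
    have hpprime : p.Prime := Nat.minFac_prime horder
    set z := g ^ (orderOf g / p) with hz
    have hzord : orderOf z = p := by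
      rw [hz, orderOf_pow]
      have hdvd : p ∣ orderOf g := Nat.minFac_dvd _
      have hpos : 0 < orderOf g := orderOf_pos g
      rw [Nat.gcd_eq_right (Nat.div_dvd_of_dvd hdvd)]
      rw [Nat.div_div_self hdvd hpos.ne']
    have hzfix : ∀ j, z • t j = t j := by
      intro j
      have hgst : g ∈ MulAction.stabilizer G (t j) := by
        rw [MulAction.mem_stabilizer_iff]
        exact hg (t j) (Finset.mem_image.mpr ⟨j, Finset.mem_univ _, rfl⟩)
      have : z ∈ MulAction.stabilizer G (t j) := pow_mem hgst _
      exact MulAction.mem_stabilizer_iff.mp this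
    exact htbad (Finset.mem_filter.mpr ⟨Finset.mem_univ _, z, hzord ▸ hpprime, hzfix⟩)
end

section
/- Let G be a finite group, H a subgroup, and suppose x_1,...,x_m are elements of G lying in pairwise distinct conjugacy classes with Σ_i |x_i^G ∩ H| ≤ A and |x_i^G| ≥ B for all i, where A, B > 0. Then for every positive integer c, Σ_{i=1}^m |x_i^G| · (|x_i^G ∩ H|/|x_i^G|)^c ≤ B · (A/B)^c. -/
/-- Let `G` be a finite group, `H ≤ G`, and `x₁, …, x_m` elements of
`G` in pairwise distinct conjugacy classes with `∑ᵢ |xᵢᴳ ∩ H| ≤ A` and `|xᵢᴳ| ≥ B` for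
all `i`, where `A, B > 0`.  Then for every positive integer `c`,
`∑ᵢ |xᵢᴳ| · (|xᵢᴳ ∩ H| / |xᵢᴳ|)^c ≤ B · (A/B)^c`. -/
theorem sum_class_fpr_pow_le
    {G : Type*} [Group G] [Fintype G] (H : Subgroup G)
    {m : ℕ} (x : Fin m → G)
    (hdistinct : ∀ i j, i ≠ j → ¬ IsConj (x i) (x j))
    (A B : ℝ) (hA : 0 < A) (hB : 0 < B)
    (hAbound : ∑ i : Fin m, (Nat.card {y : G | IsConj (x i) y ∧ y ∈ H} : ℝ) ≤ A)
    (hBbound : ∀ i, B ≤ (Nat.card {y : G | IsConj (x i) y} : ℝ))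
    (c : ℕ) (hc : 0 < c) :
    ∑ i : Fin m,
        (Nat.card {y : G | IsConj (x i) y} : ℝ) *
          ((Nat.card {y : G | IsConj (x i) y ∧ y ∈ H} : ℝ) /
            (Nat.card {y : G | IsConj (x i) y} : ℝ)) ^ c
      ≤ B * (A / B) ^ c := by
  obtain ⟨k, rfl⟩ : ∃ k, c = k + 1 := ⟨c - 1, (Nat.succ_pred_eq_of_pos hc).symm⟩
  set a : Fin m → ℝ := fun i => (Nat.card {y : G | IsConj (x i) y ∧ y ∈ H} : ℝ) with ha
  set n : Fin m → ℝ := fun i => (Nat.card {y : G | IsConj (x i) y} : ℝ) with hn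
  have han : ∀ i, 0 ≤ a i := fun i => Nat.cast_nonneg _
  have hnpos : ∀ i, 0 < n i := fun i => lt_of_lt_of_le hB (hBbound i)
  have haA : ∀ i, a i ≤ A := fun i =>
    le_trans (Finset.single_le_sum (fun j _ => han j) (Finset.mem_univ i)) hAbound
  have key : ∀ i, n i * (a i / n i) ^ (k + 1) ≤ a i * (A / B) ^ k := by
    intro i
    have hne : n i ≠ 0 := (hnpos i).ne'
    have h1 : n i * (a i / n i) ^ (k + 1) = a i * (a i / n i) ^ k := by
      rw [pow_succ]; field_simp
    rw [h1]
    have hratio : a i / n i ≤ A / B :=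
      div_le_div₀ hA.le (haA i) hB (hBbound i)
    have hr0 : 0 ≤ a i / n i := div_nonneg (han i) (hnpos i).le
    exact mul_le_mul_of_nonneg_left (pow_le_pow_left₀ hr0 hratio k) (han i)
  calc ∑ i : Fin m, n i * (a i / n i) ^ (k + 1)
      ≤ ∑ i : Fin m, a i * (A / B) ^ k := Finset.sum_le_sum fun i _ => key i
    _ = (∑ i : Fin m, a i) * (A / B) ^ k := by rw [← Finset.sum_mul]
    _ ≤ A * (A / B) ^ k := by
        exact mul_le_mul_of_nonneg_right hAbound (pow_nonneg (div_nonneg hA.le hB.le) k)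
    _ = B * (A / B) ^ (k + 1) := by
        rw [pow_succ]; field_simp
end

section
/- Let H be a finite group, A a faithful irreducible H-module, t a positive integer, and G = A^t ⋊ H the semidirect product with the diagonal-component action. Then t ≤ α(G) ≤ t + dim_{End_H(A)}(A), where α(G) is the minimal number of maximal subgroups of G intersecting in Frat(G). -/
namespace Stmt11

/-- The action of `H` on `A` by additive automorphisms, packaged as a homomorphism
`H →* MulAut (Multiplicative A)`, used to form the semidirect product `A ⋊ H`. -/
def mulAutOfSMul (H A : Type*) [Group H] [AddCommGroup A] [DistribMulAction H A] :
    H →* MulAut (Multiplicative A) where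
  toFun h :=
    { toFun := fun a => Multiplicative.ofAdd (h • a.toAdd)
      invFun := fun a => Multiplicative.ofAdd (h⁻¹ • a.toAdd)
      left_inv := fun a => by simp
      right_inv := fun a => by simp
      map_mul' := fun a b => by simp [smul_add, ofAdd_add] }
  map_one' := by ext a; simp
  map_mul' g h := by ext a; simp [mul_smul]

/-- The intersection number `α(G)`: the minimal number of maximal subgroups of `G`
whose intersection is the Frattini subgroup. -/
noncomputable def interNum (G : Type*) [Group G] : ℕ :=
  sInf {n | ∃ T : Finset (Subgroup G), T.card = n ∧ (∀ H ∈ T, IsCoatom H) ∧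
    T.inf id = frattini G}

section

variable {H A : Type*} [Group H] [AddCommGroup A] [DistribMulAction H A] {t : ℕ}

local notation "G" => Multiplicative (Fin t → A) ⋊[mulAutOfSMul H (Fin t → A)] H

open SemidirectProduct

lemma aut_apply (h : H) (a : Multiplicative (Fin t → A)) :
    (mulAutOfSMul H (Fin t → A) h a).toAdd = h • a.toAdd := rfl

lemma aut_apply' (h : H) (n : Fin t → A) :
    mulAutOfSMul H (Fin t → A) h (Multiplicative.ofAdd n) = Multiplicative.ofAdd (h • n) := rfl

lemma conj_inl' (g : G) (x : Multiplicative (Fin t → A)) :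
    g * inl x * g⁻¹ = inl (mulAutOfSMul H (Fin t → A) g.right x) := by
  ext
  · simp [mul_left, inv_left, inv_right, mul_comm]
  · simp [mul_right, inv_right]

/-- The subgroup `W ⋊ H` for an `H`-invariant additive subgroup `W ≤ A^t`. -/
def KW (W : AddSubgroup (Fin t → A)) (hW : ∀ h : H, ∀ n ∈ W, h • n ∈ W) : Subgroup G where
  carrier := {g | g.left.toAdd ∈ W}
  one_mem' := by simpa [one_left] using W.zero_mem
  mul_mem' := by
    intro a b ha hb
    simp only [Set.mem_setOf_eq, mul_left] at *
    rw [toAdd_mul, aut_apply]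
    exact W.add_mem ha (hW _ _ hb)
  inv_mem' := by
    intro a ha
    simp only [Set.mem_setOf_eq, inv_left] at *
    rw [aut_apply]
    simpa using hW a.right⁻¹ _ (W.neg_mem ha)

lemma mem_KW {W : AddSubgroup (Fin t → A)} {hW : ∀ h : H, ∀ n ∈ W, h • n ∈ W} (g : G) :
    g ∈ KW W hW ↔ g.left.toAdd ∈ W := Iff.rfl

lemma inr_mem_KW {W : AddSubgroup (Fin t → A)} {hW : ∀ h : H, ∀ n ∈ W, h • n ∈ W} (h : H) :
    inr h ∈ KW W hW := by simp [mem_KW, right_inr, left_inr]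

/-- coordinate hyperplane -/
def Wc (i : Fin t) : AddSubgroup (Fin t → A) :=
  (Pi.evalAddMonoidHom (fun _ => A) i).ker

lemma mem_Wc {i : Fin t} {n : Fin t → A} : n ∈ Wc i ↔ n i = 0 := Iff.rfl

lemma Wc_inv (i : Fin t) : ∀ h : H, ∀ n ∈ Wc (A := A) i, h • n ∈ Wc i := by
  intro h n hn
  simp only [mem_Wc] at *
  show h • n i = 0
  rw [hn, smul_zero]

/-- the additive subgroup of `A^t` underlying (the kernel part of) a subgroup of `G` -/
def VL (L : Subgroup G) : AddSubgroup (Fin t → A) where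
  carrier := {n | inl (Multiplicative.ofAdd n) ∈ L}
  zero_mem' := by simpa using L.one_mem
  add_mem' := by
    intro a b ha hb
    simpa [ofAdd_add] using L.mul_mem ha hb
  neg_mem' := by
    intro a ha
    simpa [ofAdd_neg] using L.inv_mem ha

lemma mem_VL {L : Subgroup G} {n : Fin t → A} :
    n ∈ VL L ↔ inl (Multiplicative.ofAdd n) ∈ L := Iff.rfl

lemma VL_inv {L : Subgroup G} (hL : ∀ h : H, (inr h : G) ∈ L) :
    ∀ h : H, ∀ n ∈ VL L, h • n ∈ VL L := by
  intro h n hn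
  rw [mem_VL] at *
  have h1 := L.mul_mem (L.mul_mem (hL h) hn) (L.inv_mem (hL h))
  have h2 := conj_inl' (inr h) (Multiplicative.ofAdd n)
  rw [right_inr] at h2
  rw [mul_assoc] at h1
  rw [← mul_assoc] at h1
  rw [h2] at h1
  exact h1
  
/-- projection of a submodule at coordinate `i` -/
def proj (V : AddSubgroup (Fin t → A)) (i : Fin t) : AddSubgroup A :=
  V.map (Pi.evalAddMonoidHom (fun _ => A) i)

lemma proj_inv {V : AddSubgroup (Fin t → A)} (hV : ∀ h : H, ∀ n ∈ V, h • n ∈ V) (i : Fin t) :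
    ∀ h : H, ∀ a ∈ proj V i, h • a ∈ proj V i := by
  rintro h a ⟨n, hn, rfl⟩
  exact ⟨h • n, hV h n hn, rfl⟩

/-- the "slice" of a submodule at coordinate `i` -/
def Pj (V : AddSubgroup (Fin t → A)) (i : Fin t) : AddSubgroup A :=
  V.comap ((AddMonoidHom.single (fun _ => A) i))

lemma mem_Pj {V : AddSubgroup (Fin t → A)} {i : Fin t} {a : A} :
    a ∈ Pj V i ↔ Pi.single i a ∈ V := Iff.rfl

lemma Pj_inv {V : AddSubgroup (Fin t → A)} (hV : ∀ h : H, ∀ n ∈ V, h • n ∈ V) (i : Fin t) :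
    ∀ h : H, ∀ a ∈ Pj V i, h • a ∈ Pj V i := by
  intro h a ha
  rw [mem_Pj] at *
  rw [Pi.single_smul']
  exact hV h _ ha

lemma VL_eq_top_iff {V : AddSubgroup (Fin t → A)}
    (hirr : ∀ W : AddSubgroup A, (∀ h : H, ∀ a ∈ W, h • a ∈ W) → W = ⊥ ∨ W = ⊤)
    (hV : ∀ h : H, ∀ n ∈ V, h • n ∈ V) (hPj : ∀ i, Pj V i = ⊤) : V = ⊤ := by
  rw [eq_top_iff]
  intro n _
  have : n = ∑ i, Pi.single i (n i) := (Finset.univ_sum_single n).symm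
  rw [this]
  exact AddSubgroup.sum_mem V (fun i _ => by
    have : n i ∈ Pj V i := by rw [hPj i]; trivial
    exact this)

lemma isCoatom_K [Nontrivial A]
    (hirr : ∀ W : AddSubgroup A, (∀ h : H, ∀ a ∈ W, h • a ∈ W) → W = ⊥ ∨ W = ⊤)
    (i : Fin t) : IsCoatom (KW (Wc (A := A) i) (Wc_inv (H := H) i)) := by
  constructor
  · intro htop
    obtain ⟨a, ha⟩ := exists_ne (0 : A)
    have : (inl (Multiplicative.ofAdd (Pi.single i a)) : G) ∈ KW (Wc (A := A) i) (Wc_inv (H := H) i) := by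
      rw [htop]; trivial
    rw [mem_KW] at this
    simp only [left_inl, toAdd_ofAdd, mem_Wc, Pi.single_eq_same] at this
    exact ha this
  · intro L hL
    have hinr : ∀ h : H, (inr h : G) ∈ L := fun h => hL.le (inr_mem_KW h)
    have hVinv := VL_inv hinr
    obtain ⟨x, hxL, hxK⟩ := SetLike.exists_of_lt hL
    have hxl : inl x.left ∈ L := by
      have h1 := L.mul_mem hxL (L.inv_mem (hinr x.right))
      have h2 : x * (inr x.right)⁻¹ = inl x.left := by
        rw [eq_comm, eq_mul_inv_iff_mul_eq, inl_left_mul_inr_right]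
      rwa [h2] at h1
    have hmV : x.left.toAdd ∈ VL L := hxl
    have hm : x.left.toAdd i ≠ 0 := fun h0 => hxK ((mem_KW x).2 h0)
    have hproj : proj (VL L) i = ⊤ := by
      rcases hirr _ (proj_inv hVinv i) with hbot | htop
      · exfalso
        apply hm
        have : x.left.toAdd i ∈ proj (VL L) i := ⟨_, hmV, rfl⟩
        rwa [hbot, AddSubgroup.mem_bot] at this
      · exact htop
    have hVL : ∀ n : Fin t → A, n ∈ VL L := by
      intro n
      have : n i ∈ proj (VL L) i := by rw [hproj]; trivial
      obtain ⟨w, hw, hwi⟩ := this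
      have h1 : n - w ∈ VL L := hL.le (show (n : Fin t → A) - w ∈ Wc i by
        rw [mem_Wc, Pi.sub_apply]
        rw [show w i = n i from hwi, sub_self])
      have := (VL L).add_mem h1 hw
      rwa [sub_add_cancel] at this
    rw [eq_top_iff]
    intro g _
    rw [← inl_left_mul_inr_right g]
    exact L.mul_mem (hVL g.left.toAdd) (hinr _)

lemma conj_inr_left (b : Fin t → A) (h : H) :
    ((inl (Multiplicative.ofAdd b) * inr h * (inl (Multiplicative.ofAdd b))⁻¹ :
      G)).left.toAdd = b - h • b := by
  simp only [mul_left, inv_left, mul_right, inv_right, left_inl, right_inl, left_inr, right_inr]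
  simp [aut_apply, smul_add, mul_smul, sub_eq_add_neg]

lemma single_conj_mem_iff (i : Fin t) (a : A) (h : H) :
    ((inl (Multiplicative.ofAdd (Pi.single i a)) * inr h *
      (inl (Multiplicative.ofAdd (Pi.single i a)))⁻¹ : G) ∈
        KW (Wc (A := A) i) (Wc_inv (H := H) i)) ↔ h • a = a := by
  rw [mem_KW, mem_Wc, conj_inr_left]
  rw [Pi.sub_apply, Pi.smul_apply, Pi.single_eq_same, sub_eq_zero, eq_comm]

/-- the `i`-th coordinate copy of `A` inside `G` -/
def Jsub (i : Fin t) : Subgroup G where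
  carrier := Set.range (fun a : A => (inl (Multiplicative.ofAdd (Pi.single i a)) : G))
  one_mem' := ⟨0, by simp⟩
  mul_mem' := by
    rintro _ _ ⟨a, rfl⟩ ⟨b, rfl⟩
    exact ⟨a + b, by simp [Pi.single_add, ofAdd_add]⟩
  inv_mem' := by
    rintro _ ⟨a, rfl⟩
    exact ⟨-a, by simp [Pi.single_neg, ofAdd_neg]⟩

lemma Jsub_normal (i : Fin t) : (Jsub (H := H) (A := A) i).Normal := by
  constructor
  rintro _ ⟨a, rfl⟩ g
  have hc := conj_inl' g (Multiplicative.ofAdd (Pi.single i a))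
  rw [aut_apply'] at hc
  show g * (inl (Multiplicative.ofAdd (Pi.single i a)) : G) * g⁻¹ ∈ _
  rw [hc]
  refine ⟨g.right • a, ?_⟩
  show (inl (Multiplicative.ofAdd (Pi.single i (g.right • a))) : G) = _
  rw [Pi.single_smul']

lemma range_inl_normal : ((inl : Multiplicative (Fin t → A) →* G).range).Normal := by
  constructor
  rintro _ ⟨x, rfl⟩ g
  rw [conj_inl' g x]
  exact ⟨_, rfl⟩

lemma quot_card [Nontrivial A]
    (hirr : ∀ W : AddSubgroup A, (∀ h : H, ∀ a ∈ W, h • a ∈ W) → W = ⊥ ∨ W = ⊤)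
    (M : Subgroup G) (hM : IsCoatom M)
    (hnle : ¬ ((inl : Multiplicative (Fin t → A) →* G).range ≤ M)) :
    ∃ q : A → (Fin t → A) ⧸ VL M, Function.Surjective q := by
  classical
  letI := range_inl_normal (H := H) (A := A) (t := t)
  -- decomposition G = M * N
  have hsup : M ⊔ (inl : Multiplicative (Fin t → A) →* G).range = ⊤ :=
    hM.2 _ (left_lt_sup.mpr hnle)
  have dec : ∀ g : G, ∃ m ∈ M, ∃ x : Multiplicative (Fin t → A), m * inl x = g := by
    intro g
    have hg : g ∈ ((M ⊔ (inl : Multiplicative (Fin t → A) →* G).range : Subgroup G) : Set _) := by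
      rw [hsup]; trivial
    rw [Subgroup.mul_normal] at hg
    obtain ⟨m, hm, x, ⟨n, rfl⟩, hmul⟩ := hg
    exact ⟨m, hm, n, hmul⟩
  -- VL M is H-invariant
  have hVinv : ∀ h : H, ∀ n ∈ VL M, h • n ∈ VL M := by
    intro h n hn
    obtain ⟨m, hm, w, hw⟩ := dec (inr h)
    rw [mem_VL] at hn ⊢
    have hc : (inl (Multiplicative.ofAdd (h • n)) : G) =
        inr h * inl (Multiplicative.ofAdd n) * (inr h)⁻¹ := by
      have := conj_inl' (inr h : G) (Multiplicative.ofAdd n)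
      rw [right_inr] at this
      rw [this, aut_apply']
    have hcomm : ∀ w x : Multiplicative (Fin t → A),
        (inl w : G) * inl x * (inl w)⁻¹ = inl x := by
      intro w x
      rw [← map_mul, mul_comm, map_mul, mul_inv_cancel_right]
    rw [hc, ← hw]
    have e1 : (m * inl w) * inl (Multiplicative.ofAdd n) * (m * inl w)⁻¹ =
        m * (inl w * inl (Multiplicative.ofAdd n) * (inl w)⁻¹) * m⁻¹ := by
      group
    rw [e1, hcomm]
    exact M.mul_mem (M.mul_mem hm hn) (M.inv_mem hm)
  -- VL M is not everything
  have hVne : VL M ≠ ⊤ := by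
    intro htop
    apply hnle
    rintro _ ⟨n, rfl⟩
    have : n.toAdd ∈ VL M := by rw [htop]; trivial
    rw [mem_VL] at this
    exact this
  -- find a coordinate where the slice is trivial
  have : ∃ i, Pj (VL M) i ≠ ⊤ := by
    by_contra hcon
    push_neg at hcon
    exact hVne (VL_eq_top_iff hirr hVinv hcon)
  obtain ⟨i, hi⟩ := this
  have hPbot : Pj (VL M) i = ⊥ := (hirr _ (Pj_inv hVinv i)).resolve_right hi
  -- Jsub i is not contained in M
  letI := Jsub_normal (H := H) (A := A) i
  have hJnle : ¬ (Jsub (H := H) (A := A) i ≤ M) := by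
    intro hle
    obtain ⟨a, ha⟩ := exists_ne (0 : A)
    apply ha
    have : a ∈ Pj (VL M) i := hle ⟨a, rfl⟩
    rwa [hPbot, AddSubgroup.mem_bot] at this
  have hsupJ : M ⊔ Jsub (H := H) (A := A) i = ⊤ := hM.2 _ (left_lt_sup.mpr hJnle)
  -- the quotient is covered by single i
  refine ⟨fun a => QuotientAddGroup.mk (Pi.single i a), ?_⟩
  intro y
  induction y using QuotientAddGroup.induction_on with
  | H n =>
    have hg : (inl (Multiplicative.ofAdd n) : G) ∈
        ((M ⊔ Jsub (H := H) (A := A) i : Subgroup G) : Set _) := by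
      rw [hsupJ]; trivial
    rw [Subgroup.mul_normal] at hg
    obtain ⟨m, hm, _, ⟨a, rfl⟩, hmul⟩ := hg
    have hmul' : m * inl (Multiplicative.ofAdd (Pi.single i a)) =
        inl (Multiplicative.ofAdd n) := hmul
    refine ⟨a, ?_⟩
    rw [QuotientAddGroup.eq]
    have hmm : m = inl (Multiplicative.ofAdd n) *
        (inl (Multiplicative.ofAdd (Pi.single i a)))⁻¹ := by
      rw [eq_mul_inv_iff_mul_eq, hmul']
    have : n - Pi.single i a ∈ VL M := by
      rw [mem_VL]
      have : (inl (Multiplicative.ofAdd (n - Pi.single i a)) : G) = m := by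
        rw [hmm, ← map_inv, ← map_mul]
        congr 1
        rw [← ofAdd_neg, ← ofAdd_add, sub_eq_add_neg]
      rw [this]; exact hm
    rwa [← sub_eq_neg_add]

lemma lower_bound [Finite A] [Nontrivial A]
    (hirr : ∀ W : AddSubgroup A, (∀ h : H, ∀ a ∈ W, h • a ∈ W) → W = ⊥ ∨ W = ⊤)
    (T : Finset (Subgroup G)) (hco : ∀ M ∈ T, IsCoatom M) (hinf : T.inf id = ⊥) :
    t ≤ T.card := by
  classical
  set S : Finset (Subgroup G) :=
    T.filter (fun M => ¬ ((inl : Multiplicative (Fin t → A) →* G).range ≤ M)) with hS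
  have hinj : Function.Injective
      (fun (n : Fin t → A) (M : S) => (QuotientAddGroup.mk n : (Fin t → A) ⧸ VL (M : Subgroup G))) := by
    intro x y hxy
    have hall : ∀ M ∈ T, (inl (Multiplicative.ofAdd (-x + y)) : G) ∈ M := by
      intro M hM
      by_cases hle : (inl : Multiplicative (Fin t → A) →* G).range ≤ M
      · exact hle ⟨_, rfl⟩
      · have hMS : M ∈ S := Finset.mem_filter.mpr ⟨hM, hle⟩
        have hxy' := congrFun hxy (⟨M, hMS⟩ : S)
        have : -x + y ∈ VL M := QuotientAddGroup.eq.mp hxy'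
        exact this
    have hbot : (inl (Multiplicative.ofAdd (-x + y)) : G) ∈ T.inf id := by
      rw [Finset.inf_eq_iInf]
      rw [Subgroup.mem_iInf]
      intro M
      rw [Subgroup.mem_iInf]
      intro hM
      exact hall M hM
    rw [hinf, Subgroup.mem_bot] at hbot
    have : Multiplicative.ofAdd (-x + y) = (1 : Multiplicative (Fin t → A)) :=
      inl_injective (by rw [hbot, map_one])
    have h0 : -x + y = 0 := this
    exact neg_add_eq_zero.mp h0
  have hcard1 : Nat.card (Fin t → A) ≤
      Nat.card (∀ M : S, (Fin t → A) ⧸ VL (M : Subgroup G)) :=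
    Nat.card_le_card_of_injective _ hinj
  have hcard2 : Nat.card (∀ M : S, (Fin t → A) ⧸ VL (M : Subgroup G)) =
      ∏ M : S, Nat.card ((Fin t → A) ⧸ VL (M : Subgroup G)) := Nat.card_pi
  have hcard3 : ∏ M : S, Nat.card ((Fin t → A) ⧸ VL (M : Subgroup G)) ≤
      ∏ _M : S, Nat.card A := by
    refine Finset.prod_le_prod' ?_
    rintro ⟨M, hMS⟩ _
    obtain ⟨q, hq⟩ := quot_card hirr M (hco M (Finset.mem_filter.mp hMS).1)
      (Finset.mem_filter.mp hMS).2
    exact Nat.card_le_card_of_surjective q hq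
  have hcard4 : ∏ _M : S, Nat.card A = Nat.card A ^ S.card := by
    rw [Finset.prod_const, Finset.card_univ, Fintype.card_coe]
  have hcard5 : Nat.card (Fin t → A) = Nat.card A ^ t := by
    rw [Nat.card_fun, Nat.card_eq_fintype_card (α := Fin t), Fintype.card_fin]
  have hfinal : Nat.card A ^ t ≤ Nat.card A ^ S.card := by
    rw [← hcard5, ← hcard4]
    exact hcard1.trans (hcard2.le.trans hcard3)
  have hA : 1 < Nat.card A := Finite.one_lt_card_iff_nontrivial.mpr ‹_›
  exact ((Nat.pow_le_pow_iff_right hA).mp hfinal).trans (Finset.card_filter_le T _)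

end

/-- Let `H` be a finite group, `A` a finite faithful irreducible
`H`-module, `t ≥ 1`, and `G = A^t ⋊ H` the semidirect product with the componentwise
action.  Then `t ≤ α(G) ≤ t + dim_{End_H(A)}(A)`, where the dimension is witnessed by
a spanning family `v : Fin d → A` of `A` over the endomorphism ring `End_H(A)`. -/
theorem t_le_interNum_le_t_add_dim
    (H A : Type*) [Group H] [Finite H] [AddCommGroup A] [Finite A] [Nontrivial A]
    [DistribMulAction H A] [FaithfulSMul H A]
    (hirr : ∀ W : AddSubgroup A, (∀ h : H, ∀ a ∈ W, h • a ∈ W) → W = ⊥ ∨ W = ⊤)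
    (t : ℕ) (ht : 1 ≤ t)
    (d : ℕ) (v : Fin d → A)
    (hspan : ∀ x : A, ∃ f : Fin d → (A →+ A),
      (∀ i, ∀ h : H, ∀ a : A, f i (h • a) = h • f i a) ∧ x = ∑ i, f i (v i)) :
    t ≤ interNum (Multiplicative (Fin t → A) ⋊[mulAutOfSMul H (Fin t → A)] H) ∧
      interNum (Multiplicative (Fin t → A) ⋊[mulAutOfSMul H (Fin t → A)] H) ≤ t + d := by
  classical
  set G := Multiplicative (Fin t → A) ⋊[mulAutOfSMul H (Fin t → A)] H with hG
  let i0 : Fin t := ⟨0, ht⟩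
  let Kc : Fin t → Subgroup G := fun i => KW (Wc (A := A) i) (Wc_inv (H := H) i)
  let cc : Fin d → G := fun j => SemidirectProduct.inl (Multiplicative.ofAdd (Pi.single i0 (v j)))
  let Cc : Fin d → Subgroup G := fun j => (MulEquiv.comapSubgroup (MulAut.conj (cc j))) (Kc i0)
  have hKco : ∀ i, IsCoatom (Kc i) := fun i => isCoatom_K hirr i
  have hCco : ∀ j, IsCoatom (Cc j) :=
    fun j => ((MulEquiv.comapSubgroup (MulAut.conj (cc j))).isCoatom_iff (Kc i0)).mpr (hKco i0)
  have hint : ∀ g : G, (∀ i, g ∈ Kc i) → (∀ j, g ∈ Cc j) → g = 1 := by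
    intro g hK hC
    have hleft : g.left = 1 := by
      have hz : g.left.toAdd = 0 := funext fun i => (hK i : g.left.toAdd ∈ Wc i)
      rw [← ofAdd_toAdd g.left, hz, ofAdd_zero]
    have hg : g = SemidirectProduct.inr g.right := by
      have hg0 := (SemidirectProduct.inl_left_mul_inr_right g).symm
      rwa [hleft, map_one, one_mul] at hg0
    have hfix : ∀ j, g.right • v j = v j := by
      intro j
      have hCj : (cc j) * g * (cc j)⁻¹ ∈ Kc i0 := hC j
      rw [hg] at hCj
      exact (single_conj_mem_iff i0 (v j) g.right).mp hCj
    have hone : g.right = 1 := by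
      refine eq_of_smul_eq_smul (M := H) (α := A) fun a => ?_
      obtain ⟨f, hf, hsum⟩ := hspan a
      rw [one_smul, hsum, Finset.smul_sum]
      refine Finset.sum_congr rfl fun j _ => ?_
      rw [← hf j g.right (v j), hfix j]
    rw [hg, hone, map_one]
  let T : Finset (Subgroup G) := Finset.image Kc Finset.univ ∪ Finset.image Cc Finset.univ
  have hTco : ∀ M ∈ T, IsCoatom M := by
    intro M hM
    rcases Finset.mem_union.mp hM with h | h <;> obtain ⟨i, _, rfl⟩ := Finset.mem_image.mp h
    exacts [hKco i, hCco i]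
  have hTbot : T.inf id = ⊥ := by
    rw [eq_bot_iff]
    intro g hg
    have hmem : ∀ M ∈ T, g ∈ M := fun M hM => (Finset.inf_le hM : T.inf id ≤ id M) hg
    rw [Subgroup.mem_bot]
    exact hint g
      (fun i => hmem _ (Finset.mem_union_left _ (Finset.mem_image_of_mem Kc (Finset.mem_univ i))))
      (fun j => hmem _ (Finset.mem_union_right _ (Finset.mem_image_of_mem Cc (Finset.mem_univ j))))
  have hfr : frattini G = ⊥ := by
    rw [eq_bot_iff, ← hTbot]
    exact Finset.le_inf fun M hM => frattini_le_coatom (hTco M hM)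
  have hmem : T.card ∈ {n | ∃ T' : Finset (Subgroup G), T'.card = n ∧
      (∀ K ∈ T', IsCoatom K) ∧ T'.inf id = frattini G} :=
    ⟨T, rfl, hTco, by rw [hTbot, hfr]⟩
  constructor
  · refine le_csInf ⟨T.card, hmem⟩ ?_
    rintro n ⟨T', rfl, hco', hinf'⟩
    exact lower_bound hirr T' hco' (by rw [hinf', hfr])
  · refine (Nat.sInf_le hmem).trans ?_
    calc T.card ≤ (Finset.image Kc Finset.univ).card + (Finset.image Cc Finset.univ).card :=
          Finset.card_union_le _ _
    _ ≤ t + d := add_le_add (Finset.card_image_le.trans (by simp))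
          (Finset.card_image_le.trans (by simp))


end Stmt11
end
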